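/- arXiv:2405.03269 — 6 statements merged into one kernel-verified Lean document; each statement's English description precedes it below -/
import Mathlib

section
/- Let (X, d) be a proper geodesic metric space and let ℓ be a D-contracting geodesic in X. Then for any x ∈ X, any y ∈ ℓ, and any nearest-point projection z ∈ π_ℓ(x), if d(y,z) > 2D then every geodesic [x,y] from x to y passes within distance 4D of z. More precisely, choosing w ∈ [y,z] with 2D < d(w,z) < 3D, one has d(w, [x,z]) > D for any geodesic [x,z], hence d(z, [x,y]) < 4D follows whenever geodesic triangles with one side on ℓ are D-slim. -/
open Set Metric

/-- `s` is (the image of) a geodesic segment from `a` to `b`. -/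
def IsGeodSeg {X : Type*} [MetricSpace X] (s : Set X) (a b : X) : Prop :=
  ∃ f : ℝ → X, f 0 = a ∧ f (dist a b) = b ∧
    (∀ u ∈ Set.Icc (0 : ℝ) (dist a b), ∀ v ∈ Set.Icc (0 : ℝ) (dist a b),
      dist (f u) (f v) = |u - v|) ∧
    f '' Set.Icc (0 : ℝ) (dist a b) = s

/-- `ℓ` is (the image of) a geodesic: an isometric image of an interval of `ℝ`. -/
def IsGeodesicSet {X : Type*} [MetricSpace X] (ℓ : Set X) : Prop :=
  ∃ (I : Set ℝ) (f : ℝ → X), I.OrdConnected ∧ f '' I = ℓ ∧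
    ∀ s ∈ I, ∀ t ∈ I, dist (f s) (f t) = |s - t|

/-- The set-valued nearest-point projection onto `ℓ`. -/
def projSet {X : Type*} [MetricSpace X] (ℓ : Set X) (x : X) : Set X :=
  {y ∈ ℓ | dist x y = Metric.infDist x ℓ}

/-- Every geodesic triangle with one side on `ℓ` is `δ`-slim. -/
def SlimOn {X : Type*} [MetricSpace X] (δ : ℝ) (ℓ : Set X) : Prop :=
  ∀ (x y z : X) (sxy syz szx : Set X),
    IsGeodSeg sxy x y → IsGeodSeg syz y z → IsGeodSeg szx z x → sxy ⊆ ℓ →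
    sxy ⊆ Metric.thickening δ (syz ∪ szx) ∧
    syz ⊆ Metric.thickening δ (szx ∪ sxy) ∧
    szx ⊆ Metric.thickening δ (sxy ∪ syz)

/-- In a geodesic set, any two points are joined by a geodesic segment inside the set. -/
lemma exists_geodSeg_subset {X : Type*} [MetricSpace X] {ℓ : Set X} (hℓ : IsGeodesicSet ℓ)
    {a b : X} (ha : a ∈ ℓ) (hb : b ∈ ℓ) : ∃ s : Set X, IsGeodSeg s a b ∧ s ⊆ ℓ := by
  obtain ⟨I, f, hI, hfI, hiso⟩ := hℓ
  rw [← hfI] at ha hb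
  obtain ⟨ta, hta, rfl⟩ := ha
  obtain ⟨tb, htb, rfl⟩ := hb
  have hd : dist (f ta) (f tb) = |ta - tb| := hiso ta hta tb htb
  rcases le_total ta tb with hle | hle
  · have hd' : dist (f ta) (f tb) = tb - ta := by
      rw [hd, abs_sub_comm, abs_of_nonneg (by linarith)]
    have hmem : ∀ u ∈ Set.Icc (0 : ℝ) (dist (f ta) (f tb)), ta + u ∈ I := by
      intro u hu
      exact hI.out hta htb ⟨by linarith [hu.1], by rw [hd'] at hu; linarith [hu.2]⟩
    refine ⟨(fun u => f (ta + u)) '' Set.Icc 0 (dist (f ta) (f tb)),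
      ⟨fun u => f (ta + u), by simp, by rw [hd']; ring_nf, ?_, rfl⟩, ?_⟩
    · intro u hu v hv
      rw [hiso _ (hmem u hu) _ (hmem v hv)]
      ring_nf
    · rintro _ ⟨u, hu, rfl⟩
      exact hfI ▸ ⟨ta + u, hmem u hu, rfl⟩
  · have hd' : dist (f ta) (f tb) = ta - tb := by
      rw [hd, abs_of_nonneg (by linarith)]
    have hmem : ∀ u ∈ Set.Icc (0 : ℝ) (dist (f ta) (f tb)), ta - u ∈ I := by
      intro u hu
      exact hI.out htb hta ⟨by rw [hd'] at hu; linarith [hu.2], by linarith [hu.1]⟩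
    refine ⟨(fun u => f (ta - u)) '' Set.Icc 0 (dist (f ta) (f tb)),
      ⟨fun u => f (ta - u), by simp, by rw [hd']; ring_nf, ?_, rfl⟩, ?_⟩
    · intro u hu v hv
      rw [hiso _ (hmem u hu) _ (hmem v hv)]
      rw [show ta - u - (ta - v) = -(u - v) by ring, abs_neg]
    · rintro _ ⟨u, hu, rfl⟩
      exact hfI ▸ ⟨ta - u, hmem u hu, rfl⟩

/-- thin triangle estimate: in a proper geodesic metric space, if every geodesic
triangle with one side on the geodesic `ℓ` is `δ`-slim, then for any `x ∈ X`, `y ∈ ℓ`, and any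
nearest-point projection `z ∈ π_ℓ(x)`, every geodesic `[x,y]` passes within distance `4δ`
of `z`. -/
theorem stmt6 {X : Type*} [MetricSpace X] [ProperSpace X]
    (hgeo : ∀ a b : X, ∃ s : Set X, IsGeodSeg s a b)
    (ℓ : Set X) (hℓ : IsGeodesicSet ℓ) (δ : ℝ) (hδ : 0 < δ) (hslim : SlimOn δ ℓ)
    (x y z : X) (hy : y ∈ ℓ) (hz : z ∈ projSet ℓ x)
    (s : Set X) (hs : IsGeodSeg s x y) :
    Metric.infDist z s < 4 * δ := by
  obtain ⟨hzℓ, hzd⟩ := hz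
  -- geodesic from y to z inside ℓ
  obtain ⟨syz, hsyz, hsyzℓ⟩ := exists_geodSeg_subset hℓ hy hzℓ
  -- geodesic from z to x
  obtain ⟨t, ht⟩ := hgeo z x
  have H := (hslim y z x syz t s hsyz ht hs hsyzℓ).2.1
  obtain ⟨g, hg0, hgd, hgiso, hgim⟩ := ht
  rcases le_or_gt (dist x z) (2 * δ) with hle | hlt
  · -- x itself is within 2δ of z, and x ∈ s
    obtain ⟨f, hf0, _, _, hfim⟩ := hs
    have hx : x ∈ s := hfim ▸ ⟨0, ⟨le_refl _, dist_nonneg⟩, hf0⟩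
    calc Metric.infDist z s ≤ dist z x := Metric.infDist_le_dist_of_mem hx
      _ ≤ 2 * δ := by rw [dist_comm]; exact hle
      _ < 4 * δ := by linarith
  · -- take w on [z,x] with d(z,w) = 2δ
    have hdzx : dist z x = dist x z := dist_comm z x
    have h2δ : (2 * δ) ∈ Set.Icc (0 : ℝ) (dist z x) := ⟨by linarith, by rw [hdzx]; linarith⟩
    have h0 : (0 : ℝ) ∈ Set.Icc (0 : ℝ) (dist z x) := ⟨le_refl _, dist_nonneg⟩
    have hD : dist z x ∈ Set.Icc (0 : ℝ) (dist z x) := ⟨dist_nonneg, le_refl _⟩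
    set w := g (2 * δ) with hw
    have hwt : w ∈ t := hgim ▸ ⟨2 * δ, h2δ, rfl⟩
    have hzw : dist z w = 2 * δ := by
      rw [hw, ← hg0, hgiso 0 h0 (2 * δ) h2δ]
      rw [abs_of_nonpos (by linarith)]; ring
    have hxw : dist x w = dist z x - 2 * δ := by
      rw [hw, ← hgd, hgiso (dist z x) hD (2 * δ) h2δ, abs_of_nonneg (by rw [hdzx]; linarith), hgd]
    obtain ⟨p, hp, hwp⟩ := Metric.mem_thickening_iff.mp (H hwt)
    rcases hp with hp | hp
    · -- p ∈ s : done
      calc Metric.infDist z s ≤ dist z p := Metric.infDist_le_dist_of_mem hp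
        _ ≤ dist z w + dist w p := dist_triangle z w p
        _ < 2 * δ + δ := by rw [hzw]; linarith
        _ < 4 * δ := by linarith
    · -- p ∈ syz ⊆ ℓ : contradicts z being a nearest point
      exfalso
      have : Metric.infDist x ℓ ≤ dist x p := Metric.infDist_le_dist_of_mem (hsyzℓ hp)
      have h2 : dist x p ≤ dist x w + dist w p := dist_triangle x w p
      rw [← hzd] at this
      rw [hxw] at h2
      linarith
end

section
/- Let (X,d) be a geodesic metric space and ℓ a geodesic such that every geodesic triangle with one side contained in ℓ is δ-slim, and moreover for every x ∈ X, y ∈ ℓ, z ∈ π_ℓ(x) one has d(z,[x,y]) < 4δ, and the 'maximum principle' holds: for any geodesic segment [a,b] and point c, the function u ↦ d(c,u) on [a,b] attains its maximum at a or b. Then ℓ is 24δ-contracting: for any ball B(x,r) disjoint from ℓ and any two points x' ∈ π_ℓ(x), y' ∈ π_ℓ(y) with y ∈ B(x,r), one has d(x', y') < 12δ, hence diam(π_ℓ(B(x,r))) ≤ 24δ. -/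
open Set Metric

lemma IsGeodSeg.mem_left {X : Type*} [MetricSpace X] {s : Set X} {a b : X}
    (h : IsGeodSeg s a b) : a ∈ s := by
  obtain ⟨f, hf0, hfd, hiso, himg⟩ := h
  rw [← himg]
  exact ⟨0, ⟨le_refl _, dist_nonneg⟩, hf0⟩

lemma IsGeodSeg.dist_add {X : Type*} [MetricSpace X] {s : Set X} {a b : X}
    (h : IsGeodSeg s a b) {p : X} (hp : p ∈ s) :
    dist a p + dist p b = dist a b := by
  obtain ⟨f, hf0, hfd, hiso, himg⟩ := h
  rw [← himg] at hp
  obtain ⟨u, hu, rfl⟩ := hp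
  have h0 : (0:ℝ) ∈ Set.Icc (0:ℝ) (dist a b) := ⟨le_refl _, dist_nonneg⟩
  have hd : dist a b ∈ Set.Icc (0:ℝ) (dist a b) := ⟨dist_nonneg, le_refl _⟩
  have h1 : dist a (f u) = u := by
    have h := hiso 0 h0 u hu
    rw [hf0] at h
    rw [h, abs_of_nonpos (by linarith [hu.1])]
    ring
  have h2 : dist (f u) b = dist a b - u := by
    have h := hiso u hu (dist a b) hd
    rw [hfd] at h
    rw [h, abs_of_nonpos (by linarith [hu.2])]
    ring
  linarith

lemma IsGeodSeg.symm {X : Type*} [MetricSpace X] {s : Set X} {a b : X}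
    (h : IsGeodSeg s a b) : IsGeodSeg s b a := by
  obtain ⟨f, hf0, hfd, hiso, himg⟩ := h
  refine ⟨fun t => f (dist a b - t), by simpa using hfd,
    by simp [dist_comm b a, hf0], ?_, ?_⟩
  · intro u hu v hv
    rw [dist_comm b a] at hu hv
    rw [hiso _ ⟨by linarith [hu.2], by linarith [hu.1]⟩
          _ ⟨by linarith [hv.2], by linarith [hv.1]⟩,
      show dist a b - u - (dist a b - v) = -(u - v) by ring, abs_neg]
  · rw [dist_comm b a, ← himg]
    have he : (fun t => f (dist a b - t)) = f ∘ (fun t => dist a b - t) := rfl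
    rw [he, Set.image_comp, Set.image_const_sub_Icc]
    simp

lemma IsGeodSeg.exists_mid {X : Type*} [MetricSpace X] {s : Set X} {a b : X}
    (h : IsGeodSeg s a b) :
    ∃ m ∈ s, dist a m = dist a b / 2 ∧ dist m b = dist a b / 2 := by
  obtain ⟨f, hf0, hfd, hiso, himg⟩ := h
  have hd : (0:ℝ) ≤ dist a b := dist_nonneg
  have hmem : dist a b / 2 ∈ Set.Icc (0:ℝ) (dist a b) := ⟨by linarith, by linarith⟩
  refine ⟨f (dist a b / 2), by rw [← himg]; exact ⟨_, hmem, rfl⟩, ?_, ?_⟩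
  · have h := hiso 0 ⟨le_refl _, hd⟩ _ hmem
    rw [hf0] at h
    rw [h, abs_of_nonpos (by linarith)]
    ring
  · have h := hiso _ hmem (dist a b) ⟨hd, le_refl _⟩
    rw [hfd] at h
    rw [h, abs_of_nonpos (by linarith)]
    ring

lemma exists_geodSeg_subset_s7 {X : Type*} [MetricSpace X] {ℓ : Set X}
    (hℓ : IsGeodesicSet ℓ) {p q : X} (hp : p ∈ ℓ) (hq : q ∈ ℓ) :
    ∃ S : Set X, IsGeodSeg S p q ∧ S ⊆ ℓ := by
  obtain ⟨I, f, hI, hfI, hiso⟩ := hℓ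
  rw [← hfI] at hp hq
  obtain ⟨sp, hsp, rfl⟩ := hp
  obtain ⟨sq, hsq, rfl⟩ := hq
  have main : ∀ u v : ℝ, u ∈ I → v ∈ I → u ≤ v →
      ∃ S, IsGeodSeg S (f u) (f v) ∧ S ⊆ ℓ := by
    intro u v hu hv huv
    have hIcc : Set.Icc u v ⊆ I := hI.out hu hv
    have hd : dist (f u) (f v) = v - u := by
      rw [hiso u hu v hv, abs_of_nonpos (by linarith)]; ring
    refine ⟨(fun t => f (u + t)) '' Set.Icc 0 (dist (f u) (f v)),
      ⟨fun t => f (u + t), by simp, ?_, ?_, rfl⟩, ?_⟩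
    · show f (u + dist (f u) (f v)) = f v
      rw [hd]; congr 1; ring
    · intro a ha b hb
      rw [hd] at ha hb
      rw [hiso _ (hIcc ⟨by linarith [ha.1], by linarith [ha.2]⟩)
            _ (hIcc ⟨by linarith [hb.1], by linarith [hb.2]⟩)]
      congr 1; ring
    · rintro _ ⟨t, ht, rfl⟩
      rw [hd] at ht
      rw [← hfI]
      exact ⟨u + t, hIcc ⟨by linarith [ht.1], by linarith [ht.2]⟩, rfl⟩
  rcases le_total sp sq with h | h
  · exact main sp sq hsp hsq h
  · obtain ⟨S, hS, hSl⟩ := main sq sp hsq hsp h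
    exact ⟨S, hS.symm, hSl⟩

/-- if `ℓ` is a geodesic in a geodesic metric space such that triangles with one
side on `ℓ` are `δ`-slim, the projection estimate `d(z,[x,y]) < 4δ` holds for `z ∈ π_ℓ(x)`,
`y ∈ ℓ`, and the maximum principle holds (distance to a point attains its maximum on a geodesic
segment at an endpoint), then `ℓ` is `24δ`-contracting: for any ball `B(x,r)` disjoint from `ℓ`,
any `y ∈ B(x,r)` and projections `x' ∈ π_ℓ(x)`, `y' ∈ π_ℓ(y)` satisfy `d(x',y') < 12δ`, and
hence `diam (π_ℓ(B(x,r))) ≤ 24δ`. -/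
theorem stmt7 {X : Type*} [MetricSpace X]
    (hgeo : ∀ a b : X, ∃ s : Set X, IsGeodSeg s a b)
    (ℓ : Set X) (hℓ : IsGeodesicSet ℓ) (δ : ℝ) (hδ : 0 < δ)
    (hslim : SlimOn δ ℓ)
    (hproj : ∀ x : X, ∀ y ∈ ℓ, ∀ z ∈ projSet ℓ x, ∀ s : Set X,
      IsGeodSeg s x y → Metric.infDist z s < 4 * δ)
    (hmax : ∀ (a b c : X) (s : Set X), IsGeodSeg s a b →
      ∀ u ∈ s, dist c u ≤ max (dist c a) (dist c b)) :
    ∀ (x : X) (r : ℝ), Metric.ball x r ∩ ℓ = ∅ →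
      (∀ y ∈ Metric.ball x r, ∀ x' ∈ projSet ℓ x, ∀ y' ∈ projSet ℓ y,
        dist x' y' < 12 * δ) ∧
      Metric.diam (⋃ y ∈ Metric.ball x r, projSet ℓ y) ≤ 24 * δ := by
  intro x r hdisj
  have key : ∀ y₁ ∈ Metric.ball x r, ∀ y₂ ∈ Metric.ball x r,
      ∀ p ∈ projSet ℓ y₁, ∀ q ∈ projSet ℓ y₂, dist p q < 12 * δ := by
    intro y₁ hy₁ y₂ hy₂ p hp q hq
    obtain ⟨hpl, hpd⟩ := hp
    obtain ⟨hql, hqd⟩ := hq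
    have hlne : ℓ.Nonempty := ⟨p, hpl⟩
    have hr : r ≤ infDist x ℓ := by
      by_contra hcon
      push_neg at hcon
      obtain ⟨z, hzl, hz⟩ := (infDist_lt_iff hlne).mp hcon
      have : z ∈ Metric.ball x r ∩ ℓ := ⟨by rwa [mem_ball, dist_comm], hzl⟩
      rw [hdisj] at this
      exact this
    -- Step 1: every projection of a ball point is at distance ≤ infDist x ℓ + 4δ from x
    have step1 : ∀ y ∈ Metric.ball x r, ∀ y' ∈ projSet ℓ y,
        dist x y' ≤ infDist x ℓ + 4 * δ := by
      intro y hy y' hy'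
      refine le_of_forall_pos_le_add ?_
      intro ε hε
      obtain ⟨w, hwl, hw⟩ := (infDist_lt_iff hlne).mp
        (by linarith : infDist x ℓ < infDist x ℓ + ε)
      obtain ⟨s, hs⟩ := hgeo y w
      have hys : y ∈ s := hs.mem_left
      obtain ⟨pt, hpt, hptd⟩ := (infDist_lt_iff ⟨y, hys⟩).mp (hproj y w hwl y' hy' s hs)
      have hmx := hmax y w x s hs pt hpt
      have hxy : dist x y < r := by rwa [mem_ball, dist_comm] at hy
      have hxpt : dist x pt ≤ infDist x ℓ + ε := by
        rcases max_cases (dist x y) (dist x w) with ⟨he, _⟩ | ⟨he, _⟩ <;>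
          rw [he] at hmx <;> linarith
      have h1 : dist x y' ≤ dist x pt + dist pt y' := dist_triangle _ _ _
      have h2 : dist pt y' = dist y' pt := dist_comm _ _
      linarith
    -- Step 2: geodesic from p to q inside ℓ, with midpoint m
    obtain ⟨S, hS, hSl⟩ := exists_geodSeg_subset_s7 hℓ hpl hql
    obtain ⟨m, hmS, hm1, hm2⟩ := hS.exists_mid
    obtain ⟨s2, hs2⟩ := hgeo q x
    obtain ⟨s3, hs3⟩ := hgeo x p
    obtain ⟨w, hw, hmw⟩ :=
      mem_thickening_iff.mp ((hslim p q x S s2 s3 hS hs2 hs3 hSl).1 hmS)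
    have hml : m ∈ ℓ := hSl hmS
    have hxm : infDist x ℓ ≤ dist x m := infDist_le_dist_of_mem hml
    have hxp : dist x p ≤ infDist x ℓ + 4 * δ := step1 y₁ hy₁ p ⟨hpl, hpd⟩
    have hxq : dist x q ≤ infDist x ℓ + 4 * δ := step1 y₂ hy₂ q ⟨hql, hqd⟩
    have hxw : infDist x ℓ - δ < dist x w := by
      have t1 : dist x m ≤ dist x w + dist w m := dist_triangle _ _ _
      have t2 : dist w m = dist m w := dist_comm _ _
      linarith
    rcases hw with hw2 | hw3
    · -- w on the geodesic from q to x
      have hadd : dist q w + dist w x = dist q x := hs2.dist_add hw2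
      have e1 : dist w x = dist x w := dist_comm _ _
      have e2 : dist q x = dist x q := dist_comm _ _
      have hqw : dist q w < 5 * δ := by linarith
      have t1 : dist m q ≤ dist m w + dist w q := dist_triangle _ _ _
      have e3 : dist w q = dist q w := dist_comm _ _
      linarith
    · -- w on the geodesic from x to p
      have hadd : dist x w + dist w p = dist x p := hs3.dist_add hw3
      have hwp : dist w p < 5 * δ := by linarith
      have t1 : dist p m ≤ dist p w + dist w m := dist_triangle _ _ _
      have e1 : dist p w = dist w p := dist_comm _ _
      have e2 : dist w m = dist m w := dist_comm _ _
      linarith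
  constructor
  · intro y hy x' hx' y' hy'
    have hr0 : 0 < r := lt_of_le_of_lt dist_nonneg hy
    exact key x (Metric.mem_ball_self hr0) y hy x' hx' y' hy'
  · refine Metric.diam_le_of_forall_dist_le (by linarith) ?_
    intro p hp q hq
    simp only [Set.mem_iUnion] at hp hq
    obtain ⟨y₁, hy₁, hp⟩ := hp
    obtain ⟨y₂, hy₂, hq⟩ := hq
    have := key y₁ hy₁ y₂ hy₂ p hp q hq
    linarith
end

section
/- Let Ω be a properly convex domain in real projective space with Hilbert metric d_Ω, let ℓ be a projective line segment that is a geodesic in Ω, and let π_ℓ : Ω → 2^ℓ be the set-valued nearest-point projection. Then for any convex subset A ⊆ Ω, the union π_ℓ(A) is a connected subset of ℓ. -/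
open Classical in
/-- The Hilbert (cross-ratio) distance of a convex domain `Ω`, in an affine-chart model:
`d_Ω(x,y) = ½ log [a,b;x,y]` computed along the chord of `Ω` through `x` and `y`
(parametrized by `t ↦ x + t(y−x)`, with chord parameters `sInf S < 0 < 1 < sSup S`). -/
noncomputable def hilbertDist {E : Type*} [NormedAddCommGroup E] [NormedSpace ℝ E]
    (Ω : Set E) (x y : E) : ℝ :=
  if x = y then 0
  else
    (1 / 2) * Real.log
      (((1 - sInf {t : ℝ | x + t • (y - x) ∈ Ω}) * sSup {t : ℝ | x + t • (y - x) ∈ Ω}) /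
        ((-sInf {t : ℝ | x + t • (y - x) ∈ Ω}) * (sSup {t : ℝ | x + t • (y - x) ∈ Ω} - 1)))

/-- A properly convex domain, in an affine-chart model: a nonempty bounded open convex set. -/
def IsProperlyConvex {E : Type*} [NormedAddCommGroup E] [NormedSpace ℝ E] (Ω : Set E) : Prop :=
  IsOpen Ω ∧ Convex ℝ Ω ∧ Bornology.IsBounded Ω ∧ Ω.Nonempty

/-- The set-valued nearest-point projection (for the Hilbert metric) onto `ℓ ⊆ Ω`. -/
noncomputable def hProjSet {E : Type*} [NormedAddCommGroup E] [NormedSpace ℝ E]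
    (Ω ℓ : Set E) (x : E) : Set E :=
  {z ∈ ℓ | hilbertDist Ω x z = sInf {r : ℝ | ∃ w ∈ ℓ, r = hilbertDist Ω x w}}

set_option linter.unusedSectionVars false
set_option linter.unusedVariables false
set_option maxHeartbeats 1000000

namespace Stmt8Aux
open Metric Set Bornology Pointwise

variable {E : Type*} [NormedAddCommGroup E] [NormedSpace ℝ E]

/-- Translate of `Ω` taking `x` to the origin. -/
def Cx (Ω : Set E) (x : E) : Set E := (fun z => z - x) '' Ω

/-- The gauge of `Ω` based at `x`. -/
noncomputable def Gg (Ω : Set E) (x v : E) : ℝ := gauge (Cx Ω x) v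

/-- Reformulated Hilbert distance. -/
noncomputable def HD (Ω : Set E) (x y : E) : ℝ :=
  (1/2) * Real.log ((1 + Gg Ω x (x - y)) / (1 - Gg Ω x (y - x)))

lemma mem_Cx {Ω : Set E} {x v : E} : v ∈ Cx Ω x ↔ x + v ∈ Ω := by
  constructor
  · rintro ⟨z, hz, rfl⟩; simpa using hz
  · intro h; exact ⟨x + v, h, add_sub_cancel_left x v⟩

variable {Ω : Set E}

lemma Cx_isOpen (hO : IsOpen Ω) (x : E) : IsOpen (Cx Ω x) := by
  have : Cx Ω x = (Homeomorph.subRight x) '' Ω := rfl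
  rw [this, Homeomorph.isOpen_image]; exact hO

lemma Cx_convex (hC : Convex ℝ Ω) (x : E) : Convex ℝ (Cx Ω x) := by
  intro a ha b hb s t hs ht hst
  rw [mem_Cx] at ha hb ⊢
  have := hC ha hb hs ht hst
  have heq : s • (x + a) + t • (x + b) = x + (s • a + t • b) := by
    rw [smul_add, smul_add]
    rw [show s • x + s • a + (t • x + t • b) = (s • x + t • x) + (s • a + t • b) by abel]
    rw [← add_smul, hst, one_smul]
  rwa [heq] at this

lemma Cx_zero_mem {x : E} (hx : x ∈ Ω) : (0 : E) ∈ Cx Ω x := by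
  rw [mem_Cx]; simpa using hx

lemma Cx_mem_nhds (hO : IsOpen Ω) {x : E} (hx : x ∈ Ω) : Cx Ω x ∈ nhds (0 : E) :=
  (Cx_isOpen hO x).mem_nhds (Cx_zero_mem hx)

lemma Cx_absorbent (hO : IsOpen Ω) {x : E} (hx : x ∈ Ω) : Absorbent ℝ (Cx Ω x) :=
  absorbent_nhds_zero (Cx_mem_nhds hO hx)

lemma Cx_subset_closedBall (hB : IsBounded Ω) (x : E) :
    ∃ R : ℝ, 0 < R ∧ Cx Ω x ⊆ closedBall 0 R := by
  obtain ⟨R, hR⟩ := hB.subset_closedBall (0 : E)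
  refine ⟨|R| + ‖x‖ + 1, by positivity, ?_⟩
  rintro v hv
  rw [mem_Cx] at hv
  have := hR hv
  rw [mem_closedBall, dist_zero_right] at this ⊢
  have h1 : ‖v‖ ≤ ‖x + v‖ + ‖x‖ := by
    have := norm_add_le (x + v) (-x); simpa using this
  have h2 : R ≤ |R| := le_abs_self R
  linarith

lemma Gg_nonneg (x v : E) : 0 ≤ Gg Ω x v := gauge_nonneg v

lemma Gg_zero (x : E) : Gg Ω x 0 = 0 := gauge_zero

lemma Gg_lt_one_of_mem (hO : IsOpen Ω) {x y : E} (hy : y ∈ Ω) : Gg Ω x (y - x) < 1 :=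
  gauge_lt_one_of_mem_of_isOpen (Cx_isOpen hO x) (by rw [mem_Cx]; simpa using hy)

lemma mem_of_Gg_lt_one (hO : IsOpen Ω) (hC : Convex ℝ Ω) {x : E} (hx : x ∈ Ω) {v : E}
    (h : Gg Ω x v < 1) : x + v ∈ Ω := by
  have := gauge_lt_one_eq_self_of_isOpen (Cx_convex hC x) (Cx_zero_mem hx) (Cx_isOpen hO x)
  have hv : v ∈ Cx Ω x := by rw [← this]; exact h
  rwa [mem_Cx] at hv

lemma Gg_pos (hO : IsOpen Ω) (hB : IsBounded Ω) {x : E} (hx : x ∈ Ω) {v : E} (hv : v ≠ 0) :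
    0 < Gg Ω x v := by
  obtain ⟨R, hR, hsub⟩ := Cx_subset_closedBall hB x
  have := le_gauge_of_subset_closedBall (s := Cx Ω x) (Cx_absorbent hO hx) hR.le hsub (x := v)
  have hvn : 0 < ‖v‖ := norm_pos_iff.mpr hv
  have hn : 0 < ‖v‖ / R := div_pos hvn hR
  exact lt_of_lt_of_le hn this

lemma Gg_smul (x : E) {t : ℝ} (ht : 0 ≤ t) (v : E) : Gg Ω x (t • v) = t * Gg Ω x v := by
  simpa [Gg, smul_eq_mul] using gauge_smul_of_nonneg ht v (s := Cx Ω x)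

lemma Gg_add_le (hO : IsOpen Ω) (hC : Convex ℝ Ω) {x : E} (hx : x ∈ Ω) (v w : E) :
    Gg Ω x (v + w) ≤ Gg Ω x v + Gg Ω x w :=
  gauge_add_le (Cx_convex hC x) (Cx_absorbent hO hx) v w


lemma mem_chord_pos (hO : IsOpen Ω) (hC : Convex ℝ Ω) {x : E} (hx : x ∈ Ω) {t : ℝ}
    (ht : 0 < t) (v : E) : (x + t • v ∈ Ω) ↔ t * Gg Ω x v < 1 := by
  have h1 : Gg Ω x (t • v) = t * Gg Ω x v := Gg_smul x ht.le _
  constructor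
  · intro h
    have h2 : t • v ∈ Cx Ω x := mem_Cx.mpr h
    have h3 : Gg Ω x (t • v) < 1 :=
      gauge_lt_one_of_mem_of_isOpen (Cx_isOpen hO x) h2
    rwa [h1] at h3
  · intro h
    have : Gg Ω x (t • v) < 1 := by rw [h1]; exact h
    exact mem_of_Gg_lt_one hO hC hx this

lemma chord_flip (x y : E) (t : ℝ) : x + t • (y - x) = x + (-t) • (x - y) := by
  rw [neg_smul, ← smul_neg, neg_sub]

lemma mem_chord_neg (hO : IsOpen Ω) (hC : Convex ℝ Ω) {x y : E} (hx : x ∈ Ω) {t : ℝ}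
    (ht : t < 0) : (x + t • (y - x) ∈ Ω) ↔ (-t) * Gg Ω x (x - y) < 1 := by
  rw [chord_flip]
  exact mem_chord_pos hO hC hx (show (0:ℝ) < -t by linarith) _

lemma chord_sSup (hO : IsOpen Ω) (hC : Convex ℝ Ω) (hB : IsBounded Ω) {x y : E}
    (hx : x ∈ Ω) (hy : y ∈ Ω) (hxy : x ≠ y) :
    sSup {t : ℝ | x + t • (y - x) ∈ Ω} = (Gg Ω x (y - x))⁻¹ := by
  set g := Gg Ω x (y - x) with hg
  have hgpos : 0 < g := Gg_pos hO hB hx (sub_ne_zero.mpr (Ne.symm hxy))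
  have hglt : g < 1 := Gg_lt_one_of_mem hO hy
  have hub : ∀ t ∈ {t : ℝ | x + t • (y - x) ∈ Ω}, t ≤ g⁻¹ := by
    intro t htm
    rcases le_or_gt t 0 with h | h
    · exact h.trans (by positivity)
    · have := (mem_chord_pos hO hC hx h _).mp htm
      rw [← hg] at this
      have : t < g⁻¹ := by
        rw [← one_div]; exact (lt_div_iff₀ hgpos).mpr this
      exact this.le
  have hlb : Ioo (0:ℝ) g⁻¹ ⊆ {t : ℝ | x + t • (y - x) ∈ Ω} := by
    intro t ⟨ht0, htg⟩
    rw [mem_setOf_eq, mem_chord_pos hO hC hx ht0 _, ← hg]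
    calc t * g < g⁻¹ * g := by exact mul_lt_mul_of_pos_right htg hgpos
    _ = 1 := inv_mul_cancel₀ hgpos.ne'
  have hne : {t : ℝ | x + t • (y - x) ∈ Ω}.Nonempty := ⟨0, by simpa using hx⟩
  have hbdd : BddAbove {t : ℝ | x + t • (y - x) ∈ Ω} := ⟨g⁻¹, hub⟩
  refine le_antisymm (csSup_le hne hub) ?_
  have h1 : sSup (Ioo (0:ℝ) g⁻¹) = g⁻¹ := csSup_Ioo (by positivity)
  rw [← h1]
  exact csSup_le_csSup hbdd (nonempty_Ioo.mpr (by positivity)) hlb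


lemma chord_sInf (hO : IsOpen Ω) (hC : Convex ℝ Ω) (hB : IsBounded Ω) {x y : E}
    (hx : x ∈ Ω) (hy : y ∈ Ω) (hxy : x ≠ y) :
    sInf {t : ℝ | x + t • (y - x) ∈ Ω} = -(Gg Ω x (x - y))⁻¹ := by
  set h := Gg Ω x (x - y) with hh
  have hhpos : 0 < h := Gg_pos hO hB hx (sub_ne_zero.mpr hxy)
  have hlbd : ∀ t ∈ {t : ℝ | x + t • (y - x) ∈ Ω}, -h⁻¹ ≤ t := by
    intro t htm
    rcases le_or_gt 0 t with h0 | h0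
    · have : -h⁻¹ < 0 := neg_lt_zero.mpr (inv_pos.mpr hhpos)
      linarith
    · rw [mem_setOf_eq, mem_chord_neg hO hC hx h0] at htm
      rw [← hh] at htm
      have : -t < h⁻¹ := by
        rw [← one_div]; exact (lt_div_iff₀ hhpos).mpr htm
      linarith
  have hub : Ioo (-h⁻¹) (0:ℝ) ⊆ {t : ℝ | x + t • (y - x) ∈ Ω} := by
    intro t ⟨ht0, htg⟩
    rw [mem_setOf_eq, mem_chord_neg hO hC hx htg, ← hh]
    have h1 : -t < h⁻¹ := by linarith
    calc (-t) * h < h⁻¹ * h := mul_lt_mul_of_pos_right h1 hhpos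
    _ = 1 := inv_mul_cancel₀ hhpos.ne'
  have hne : {t : ℝ | x + t • (y - x) ∈ Ω}.Nonempty := ⟨0, by simpa using hx⟩
  have hbdd : BddBelow {t : ℝ | x + t • (y - x) ∈ Ω} := ⟨-h⁻¹, hlbd⟩
  refine le_antisymm ?_ (le_csInf hne hlbd)
  have hneg : -h⁻¹ < 0 := neg_lt_zero.mpr (inv_pos.mpr hhpos)
  have h1 : sInf (Ioo (-h⁻¹) (0:ℝ)) = -h⁻¹ := csInf_Ioo hneg
  rw [← h1]
  exact csInf_le_csInf hbdd (nonempty_Ioo.mpr hneg) hub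

lemma hilbertDist_eq_HD (hO : IsOpen Ω) (hC : Convex ℝ Ω) (hB : IsBounded Ω) {x y : E}
    (hx : x ∈ Ω) (hy : y ∈ Ω) : hilbertDist Ω x y = HD Ω x y := by
  rcases eq_or_ne x y with rfl | hxy
  · simp [hilbertDist, HD, Gg_zero]
  · rw [hilbertDist, if_neg hxy, HD,
      chord_sSup hO hC hB hx hy hxy, chord_sInf hO hC hB hx hy hxy]
    congr 1
    set g := Gg Ω x (y - x) with hgdef
    set h := Gg Ω x (x - y) with hhdef
    have hgpos : 0 < g := Gg_pos hO hB hx (sub_ne_zero.mpr (Ne.symm hxy))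
    have hhpos : 0 < h := Gg_pos hO hB hx (sub_ne_zero.mpr hxy)
    have hglt : g < 1 := Gg_lt_one_of_mem hO hy
    congr 1
    field_simp
    ring

lemma one_sub_g_pos (hO : IsOpen Ω) {x y : E} (hy : y ∈ Ω) :
    0 < 1 - Gg Ω x (y - x) := by
  have := Gg_lt_one_of_mem hO (x := x) hy; linarith

lemma HD_arg_ge_one (hO : IsOpen Ω) {x y : E} (hy : y ∈ Ω) :
    1 ≤ (1 + Gg Ω x (x - y)) / (1 - Gg Ω x (y - x)) := by
  have h1 := one_sub_g_pos hO (x := x) hy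
  rw [le_div_iff₀ h1]
  have h2 := Gg_nonneg (Ω := Ω) x (x - y)
  have h3 := Gg_nonneg (Ω := Ω) x (y - x)
  nlinarith

lemma HD_nonneg (hO : IsOpen Ω) {x y : E} (hy : y ∈ Ω) : 0 ≤ HD Ω x y := by
  have := Real.log_nonneg (HD_arg_ge_one hO (x := x) hy)
  rw [HD]; positivity

lemma exp_two_HD (hO : IsOpen Ω) {x y : E} (hy : y ∈ Ω) :
    Real.exp (2 * HD Ω x y) = (1 + Gg Ω x (x - y)) / (1 - Gg Ω x (y - x)) := by
  rw [HD]
  rw [show 2 * ((1:ℝ)/2 * Real.log ((1 + Gg Ω x (x - y)) / (1 - Gg Ω x (y - x))))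
      = Real.log ((1 + Gg Ω x (x - y)) / (1 - Gg Ω x (y - x))) by ring]
  refine Real.exp_log ?_
  have h1 := one_sub_g_pos hO (x := x) hy
  have h2 := Gg_nonneg (Ω := Ω) x (x - y)
  positivity

lemma HD_le_iff (hO : IsOpen Ω) {x y : E} (hy : y ∈ Ω) {c : ℝ} :
    HD Ω x y ≤ c ↔ 1 + Gg Ω x (x - y) ≤ Real.exp (2 * c) * (1 - Gg Ω x (y - x)) := by
  have h1 := one_sub_g_pos hO (x := x) hy
  constructor
  · intro hle
    have := Real.exp_le_exp.mpr (by linarith : 2 * HD Ω x y ≤ 2 * c)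
    rw [exp_two_HD hO hy] at this
    rw [div_le_iff₀ h1] at this
    linarith
  · intro hle
    have h2 : (1 + Gg Ω x (x - y)) / (1 - Gg Ω x (y - x)) ≤ Real.exp (2 * c) := by
      rw [div_le_iff₀ h1]; linarith
    have h3 : Real.exp (2 * HD Ω x y) ≤ Real.exp (2 * c) := by
      rw [exp_two_HD hO hy]; exact h2
    have := Real.exp_le_exp.mp h3
    linarith

/-- Quasiconvexity of `HD x ·` along segments in `Ω`. -/
lemma HD_quasiconvex (hO : IsOpen Ω) (hC : Convex ℝ Ω) {x : E} (hx : x ∈ Ω)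
    {y₀ y₁ : E} (hy₀ : y₀ ∈ Ω) (hy₁ : y₁ ∈ Ω) {θ : ℝ} (hθ0 : 0 ≤ θ) (hθ1 : θ ≤ 1) :
    HD Ω x ((1 - θ) • y₀ + θ • y₁) ≤ max (HD Ω x y₀) (HD Ω x y₁) := by
  set y := (1 - θ) • y₀ + θ • y₁ with hydef
  have hyΩ : y ∈ Ω := hC hy₀ hy₁ (by linarith) hθ0 (by ring)
  set c := max (HD Ω x y₀) (HD Ω x y₁) with hcdef
  have h0 : HD Ω x y₀ ≤ c := le_max_left _ _
  have h1 : HD Ω x y₁ ≤ c := le_max_right _ _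
  rw [HD_le_iff hO hy₀] at h0
  rw [HD_le_iff hO hy₁] at h1
  rw [HD_le_iff hO hyΩ]
  -- convexity of the two gauges along the segment
  have hgconv : Gg Ω x (y - x) ≤ (1 - θ) * Gg Ω x (y₀ - x) + θ * Gg Ω x (y₁ - x) := by
    have hsplit : y - x = (1 - θ) • (y₀ - x) + θ • (y₁ - x) := by
      rw [hydef]; rw [smul_sub, smul_sub]
      rw [show (1 - θ) • y₀ - (1 - θ) • x + (θ • y₁ - θ • x)
          = (1 - θ) • y₀ + θ • y₁ - ((1 - θ) • x + θ • x) by abel]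
      rw [← add_smul]
      rw [show (1 - θ) + θ = (1:ℝ) by ring, one_smul]
    rw [hsplit]
    calc Gg Ω x ((1 - θ) • (y₀ - x) + θ • (y₁ - x))
        ≤ Gg Ω x ((1 - θ) • (y₀ - x)) + Gg Ω x (θ • (y₁ - x)) := Gg_add_le hO hC hx _ _
      _ = (1 - θ) * Gg Ω x (y₀ - x) + θ * Gg Ω x (y₁ - x) := by
          rw [Gg_smul x (by linarith) _, Gg_smul x hθ0 _]
  have hhconv : Gg Ω x (x - y) ≤ (1 - θ) * Gg Ω x (x - y₀) + θ * Gg Ω x (x - y₁) := by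
    have hsplit : x - y = (1 - θ) • (x - y₀) + θ • (x - y₁) := by
      rw [hydef]; rw [smul_sub, smul_sub]
      rw [show (1 - θ) • x - (1 - θ) • y₀ + (θ • x - θ • y₁)
          = ((1 - θ) • x + θ • x) - ((1 - θ) • y₀ + θ • y₁) by abel]
      rw [← add_smul]
      rw [show (1 - θ) + θ = (1:ℝ) by ring, one_smul]
    rw [hsplit]
    calc Gg Ω x ((1 - θ) • (x - y₀) + θ • (x - y₁))
        ≤ Gg Ω x ((1 - θ) • (x - y₀)) + Gg Ω x (θ • (x - y₁)) := Gg_add_le hO hC hx _ _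
      _ = (1 - θ) * Gg Ω x (x - y₀) + θ * Gg Ω x (x - y₁) := by
          rw [Gg_smul x (by linarith) _, Gg_smul x hθ0 _]
  have hexp : 0 < Real.exp (2 * c) := Real.exp_pos _
  nlinarith [mul_le_mul_of_nonneg_left h0 (by linarith : (0:ℝ) ≤ 1 - θ),
    mul_le_mul_of_nonneg_left h1 hθ0]


/-- Lipschitz estimate in the vector argument, given an interior ball. -/
lemma Gg_lipschitz (hO : IsOpen Ω) (hC : Convex ℝ Ω) {x : E} (hx : x ∈ Ω) {ρ : ℝ}
    (hρ : 0 < ρ) (hball : ball x ρ ⊆ Ω) (v w : E) :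
    Gg Ω x v ≤ Gg Ω x w + ‖v - w‖ / ρ := by
  have hsub : ball (0 : E) ρ ⊆ Cx Ω x := by
    intro u hu
    rw [mem_Cx]
    apply hball
    rw [mem_ball] at hu ⊢
    simpa [dist_eq_norm] using hu
  have h1 : Gg Ω x v ≤ Gg Ω x w + Gg Ω x (v - w) := by
    have := Gg_add_le hO hC hx w (v - w)
    rwa [show w + (v - w) = v by abel] at this
  have h2 : Gg Ω x (v - w) ≤ ‖v - w‖ / ρ := by
    have hmono := gauge_mono (absorbent_ball_zero hρ) hsub (v - w)
    rwa [gauge_ball hρ.le] at hmono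
  linarith

/-- Transport estimate for moving the basepoint. -/
lemma Gg_translate (hO : IsOpen Ω) (hC : Convex ℝ Ω) {x x' : E} (hx : x ∈ Ω) {ρ ε : ℝ}
    (hρ : 0 < ρ) (hball : ball x ρ ⊆ Ω) (hε : 0 < ε) (hε1 : ε < 1)
    (hxx' : ‖x' - x‖ < ε * ρ) (v : E) :
    (1 - ε) * Gg Ω x' v ≤ Gg Ω x v := by
  have key : ∀ t : ℝ, Gg Ω x v < t → (1 - ε) * Gg Ω x' v ≤ t := by
    intro t ht
    obtain ⟨b, hb0, hbt, hbmem⟩ := exists_lt_of_gauge_lt (Cx_absorbent hO hx) ht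
    obtain ⟨w, hw, hbw⟩ := Set.mem_smul_set.mp hbmem
    -- v = b • w, x + w ∈ Ω
    have hwΩ : x + w ∈ Ω := mem_Cx.mp hw
    -- the point x + (x' - x)/ε lies in ball x ρ ⊆ Ω
    have hmid : x + ε⁻¹ • (x' - x) ∈ Ω := by
      apply hball
      rw [mem_ball, dist_eq_norm]
      rw [show x + ε⁻¹ • (x' - x) - x = ε⁻¹ • (x' - x) by abel]
      rw [norm_smul, Real.norm_eq_abs, abs_of_pos (inv_pos.mpr hε)]
      rw [inv_mul_lt_iff₀ hε]
      linarith [hxx']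
    -- convex combination gives x' + (1-ε) • w ∈ Ω
    have hcomb : x' + (1 - ε) • w ∈ Ω := by
      have := hC hwΩ hmid (by linarith : (0:ℝ) ≤ 1 - ε) hε.le (by ring)
      have heq : (1 - ε) • (x + w) + ε • (x + ε⁻¹ • (x' - x)) = x' + (1 - ε) • w := by
        rw [smul_add, smul_add, smul_smul, mul_inv_cancel₀ hε.ne', one_smul]
        rw [show (1 - ε) • x + (1 - ε) • w + (ε • x + (x' - x)) = ((1 - ε) • x + ε • x) + (1 - ε) • w + (x' - x) by abel]
        rw [← add_smul, show (1 - ε) + ε = (1:ℝ) by ring, one_smul]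
        abel
      rwa [heq] at this
    -- hence v ∈ (b/(1-ε)) • Cx Ω x'
    have hmem' : v ∈ (b / (1 - ε)) • Cx Ω x' := by
      refine Set.mem_smul_set.mpr ⟨(1 - ε) • w, mem_Cx.mpr hcomb, ?_⟩
      have hne : (1:ℝ) - ε ≠ 0 := by linarith
      rw [smul_smul, show b / (1 - ε) * (1 - ε) = b by field_simp, hbw]
    have := gauge_le_of_mem (le_of_lt (div_pos hb0 (by linarith))) hmem'
    have h2 : Gg Ω x' v ≤ b / (1 - ε) := this
    rw [div_eq_mul_inv] at h2
    have h3 : (1 - ε) * Gg Ω x' v ≤ (1 - ε) * (b * (1 - ε)⁻¹) :=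
      mul_le_mul_of_nonneg_left h2 (by linarith)
    rw [show (1 - ε) * (b * (1 - ε)⁻¹) = b * ((1 - ε) * (1 - ε)⁻¹) by ring,
      mul_inv_cancel₀ (by linarith : (1:ℝ) - ε ≠ 0), mul_one] at h3
    linarith
  by_contra hcon
  push_neg at hcon
  obtain ⟨t, ht1, ht2⟩ := exists_between hcon
  exact absurd (key t ht1) (not_le.mpr ht2)


/-- Joint continuity of the based gauge. -/
lemma Gg_continuousAt (hO : IsOpen Ω) (hC : Convex ℝ Ω) {x₀ : E} (hx₀ : x₀ ∈ Ω) (v₀ : E) :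
    ContinuousAt (fun pr : E × E => Gg Ω pr.1 pr.2) (x₀, v₀) := by
  obtain ⟨r, hr, hball⟩ := Metric.isOpen_iff.mp hO x₀ hx₀
  set ρ := r / 2 with hρdef
  have hρ : 0 < ρ := by positivity
  have hball2 : ball x₀ (2 * ρ) ⊆ Ω := by
    rw [show 2 * ρ = r by rw [hρdef]; ring]; exact hball
  have hballρ : ball x₀ ρ ⊆ Ω := fun z hz => hball2 (by
    rw [mem_ball] at hz ⊢; linarith)
  rw [Metric.continuousAt_iff]
  intro ε' hε'
  set G := Gg Ω x₀ v₀ with hGdef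
  have hGnn : 0 ≤ G := Gg_nonneg x₀ v₀
  set ε := min (1/2 : ℝ) (ε' / (4 * (G + 1))) with hεdef
  have hε : 0 < ε := lt_min (by norm_num) (by positivity)
  have hεhalf : ε ≤ 1/2 := min_le_left _ _
  have hε1 : ε < 1 := lt_of_le_of_lt hεhalf (by norm_num)
  refine ⟨min (ε * ρ) (ε' * ρ / 4), lt_min (by positivity) (by positivity), ?_⟩
  intro p hp
  rw [Prod.dist_eq, max_lt_iff] at hp
  obtain ⟨hp1, hp2⟩ := hp
  rw [dist_eq_norm] at hp1 hp2
  have hp1' : ‖p.1 - x₀‖ < ε * ρ := lt_of_lt_of_le hp1 (min_le_left _ _)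
  have hp2' : ‖p.2 - v₀‖ < ε' * ρ / 4 := lt_of_lt_of_le hp2 (min_le_right _ _)
  have hxmem : p.1 ∈ Ω := hballρ (by
    rw [mem_ball, dist_eq_norm]
    calc ‖p.1 - x₀‖ < ε * ρ := hp1'
    _ ≤ (1/2) * ρ := mul_le_mul_of_nonneg_right hεhalf hρ.le
    _ < ρ := by linarith)
  have hballx : ball p.1 ρ ⊆ Ω := fun z hz => hball2 (by
    rw [mem_ball] at hz ⊢
    calc dist z x₀ ≤ dist z p.1 + dist p.1 x₀ := dist_triangle _ _ _
    _ < ρ + ρ := by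
        rw [dist_eq_norm]
        have : ‖p.1 - x₀‖ < ρ := by
          calc ‖p.1 - x₀‖ < ε * ρ := hp1'
          _ ≤ (1/2) * ρ := mul_le_mul_of_nonneg_right hεhalf hρ.le
          _ < ρ := by linarith
        rw [dist_eq_norm] at hz ⊢
        exact add_lt_add hz this
    _ = 2 * ρ := by ring)
  -- base-point comparison
  have hT1 : (1 - ε) * Gg Ω p.1 v₀ ≤ G := Gg_translate hO hC hx₀ hρ hballρ hε hε1 hp1' v₀
  have hT2 : (1 - ε) * G ≤ Gg Ω p.1 v₀ := by
    have hx0x : ‖x₀ - p.1‖ < ε * ρ := by rwa [norm_sub_rev]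
    exact Gg_translate hO hC hxmem hρ hballx hε hε1 hx0x v₀
  have hGx_le : Gg Ω p.1 v₀ ≤ G + 2 * ε * G := by
    nlinarith [Gg_nonneg (Ω := Ω) p.1 v₀]
  have hGx_ge : G - ε * G ≤ Gg Ω p.1 v₀ := by nlinarith
  -- vector comparison
  have hL1 : Gg Ω p.1 p.2 ≤ Gg Ω p.1 v₀ + ‖p.2 - v₀‖ / ρ :=
    Gg_lipschitz hO hC hxmem hρ hballx p.2 v₀
  have hL2 : Gg Ω p.1 v₀ ≤ Gg Ω p.1 p.2 + ‖v₀ - p.2‖ / ρ :=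
    Gg_lipschitz hO hC hxmem hρ hballx v₀ p.2
  rw [norm_sub_rev] at hL2
  have hεG : 2 * ε * G ≤ ε' / 2 := by
    have h1 : ε ≤ ε' / (4 * (G + 1)) := min_le_right _ _
    have h2 : 2 * ε * G ≤ 2 * (ε' / (4 * (G + 1))) * G :=
      mul_le_mul_of_nonneg_right (by linarith) hGnn
    calc 2 * ε * G ≤ 2 * (ε' / (4 * (G + 1))) * G := h2
    _ = ε' * (G / (2 * (G + 1))) := by
        have hG1 : G + 1 ≠ 0 := by positivity
        field_simp
        ring
    _ ≤ ε' * (1/2) := by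
        apply mul_le_mul_of_nonneg_left _ hε'.le
        rw [div_le_iff₀ (by positivity)]; linarith
    _ = ε' / 2 := by ring
  have hnorm : ‖p.2 - v₀‖ / ρ < ε' / 4 := by
    rw [div_lt_iff₀ hρ]
    calc ‖p.2 - v₀‖ < ε' * ρ / 4 := hp2'
    _ = ε' / 4 * ρ := by ring
  rw [Real.dist_eq, abs_lt]
  constructor
  · -- -(ε') < Gg p.1 p.2 - G
    have : G - (ε' / 2 + ε' / 4) < Gg Ω p.1 p.2 := by nlinarith
    linarith
  · have : Gg Ω p.1 p.2 < G + (ε' / 2 + ε' / 4) := by nlinarith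
    linarith

/-- Joint continuity of `HD` on `Ω × Ω`. -/
lemma HD_continuousAt (hO : IsOpen Ω) (hC : Convex ℝ Ω) {x₀ y₀ : E}
    (hx₀ : x₀ ∈ Ω) (hy₀ : y₀ ∈ Ω) :
    ContinuousAt (fun pr : E × E => HD Ω pr.1 pr.2) (x₀, y₀) := by
  have hmap1 : ContinuousAt (fun pr : E × E => (pr.1, pr.1 - pr.2)) (x₀, y₀) := by fun_prop
  have hmap2 : ContinuousAt (fun pr : E × E => (pr.1, pr.2 - pr.1)) (x₀, y₀) := by fun_prop
  have hh : ContinuousAt (fun pr : E × E => Gg Ω pr.1 (pr.1 - pr.2)) (x₀, y₀) := by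
    have := ContinuousAt.comp (f := fun pr : E × E => (pr.1, pr.1 - pr.2))
      (x := (x₀, y₀)) (Gg_continuousAt hO hC hx₀ (x₀ - y₀)) hmap1
    exact this
  have hg : ContinuousAt (fun pr : E × E => Gg Ω pr.1 (pr.2 - pr.1)) (x₀, y₀) := by
    have := ContinuousAt.comp (f := fun pr : E × E => (pr.1, pr.2 - pr.1))
      (x := (x₀, y₀)) (Gg_continuousAt hO hC hx₀ (y₀ - x₀)) hmap2
    exact this
  have hnum : ContinuousAt (fun pr : E × E => 1 + Gg Ω pr.1 (pr.1 - pr.2)) (x₀, y₀) :=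
    continuousAt_const.add hh
  have hden : ContinuousAt (fun pr : E × E => 1 - Gg Ω pr.1 (pr.2 - pr.1)) (x₀, y₀) :=
    continuousAt_const.sub hg
  have hdenne : 1 - Gg Ω x₀ (y₀ - x₀) ≠ 0 := ne_of_gt (one_sub_g_pos hO hy₀)
  have hquot : ContinuousAt
      (fun pr : E × E => (1 + Gg Ω pr.1 (pr.1 - pr.2)) / (1 - Gg Ω pr.1 (pr.2 - pr.1)))
      (x₀, y₀) := hnum.div hden hdenne
  have hpos : 0 < (1 + Gg Ω x₀ (x₀ - y₀)) / (1 - Gg Ω x₀ (y₀ - x₀)) := by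
    have h1 := one_sub_g_pos hO (x := x₀) hy₀
    have h2 := Gg_nonneg (Ω := Ω) x₀ (x₀ - y₀)
    positivity
  have hlog : ContinuousAt Real.log
      ((1 + Gg Ω x₀ (x₀ - y₀)) / (1 - Gg Ω x₀ (y₀ - x₀))) :=
    Real.continuousAt_log hpos.ne'
  have hcomp : ContinuousAt
      (fun pr : E × E => Real.log
        ((1 + Gg Ω pr.1 (pr.1 - pr.2)) / (1 - Gg Ω pr.1 (pr.2 - pr.1)))) (x₀, y₀) := by
    have := ContinuousAt.comp
      (f := fun pr : E × E => (1 + Gg Ω pr.1 (pr.1 - pr.2)) / (1 - Gg Ω pr.1 (pr.2 - pr.1)))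
      (x := (x₀, y₀)) hlog hquot
    exact this
  exact continuousAt_const.mul hcomp


lemma Gg_le_of_HD_le (hO : IsOpen Ω) {x y : E} (hy : y ∈ Ω) {B : ℝ} (h : HD Ω x y ≤ B) :
    Gg Ω x (y - x) ≤ 1 - Real.exp (-(2 * B)) := by
  have h1 := (HD_le_iff hO hy).mp h
  have h2 := Gg_nonneg (Ω := Ω) x (x - y)
  set g := Gg Ω x (y - x)
  have h3 : 1 ≤ Real.exp (2 * B) * (1 - g) := by linarith
  have h5 : Real.exp (-(2 * B)) * (Real.exp (2 * B) * (1 - g)) = 1 - g := by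
    rw [← mul_assoc, ← Real.exp_add]; simp
  have h6 := mul_le_mul_of_nonneg_left h3 (Real.exp_pos (-(2 * B))).le
  rw [mul_one, h5] at h6
  linarith

open Filter Topology in
theorem main {E : Type*} [NormedAddCommGroup E] [NormedSpace ℝ E]
    (Ω : Set E) (hO : IsOpen Ω) (hC : Convex ℝ Ω) (hB : IsBounded Ω)
    (p q : E) (hpq : p ≠ q) (hℓ : openSegment ℝ p q ⊆ Ω)
    (A : Set E) (hA : A ⊆ Ω) (hAc : Convex ℝ A) :
    IsPreconnected (⋃ a ∈ A, hProjSet Ω (openSegment ℝ p q) a) ∧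
      (⋃ a ∈ A, hProjSet Ω (openSegment ℝ p q) a) ⊆ openSegment ℝ p q := by
  classical
  set ℓ : Set E := openSegment ℝ p q with hℓdef
  set U : Set E := ⋃ a ∈ A, hProjSet Ω ℓ a with hUdef
  have hUsub : U ⊆ ℓ := by
    intro u hu
    rw [hUdef, mem_iUnion₂] at hu
    obtain ⟨a, ha, hua⟩ := hu
    exact hua.1
  refine ⟨?_, hUsub⟩
  -- the parametrization of the segment
  set φ : ℝ → E := fun s => p + s • (q - p) with hφdef
  have hφcont : Continuous φ := continuous_const.add (continuous_id.smul continuous_const)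
  have hℓim : ℓ = φ '' Ioo 0 1 := openSegment_eq_image' ℝ p q
  have hφΩ : ∀ s ∈ Ioo (0:ℝ) 1, φ s ∈ Ω := by
    intro s hs
    apply hℓ
    rw [hℓim]
    exact ⟨s, hs, rfl⟩
  -- distance set and infimum
  set mset : E → Set ℝ := fun a => {r : ℝ | ∃ w ∈ ℓ, r = hilbertDist Ω a w} with hmsetdef
  set m : E → ℝ := fun a => sInf (mset a) with hmdef
  have hbridge : ∀ a ∈ Ω, ∀ w ∈ Ω, hilbertDist Ω a w = HD Ω a w :=
    fun a ha w hw => hilbertDist_eq_HD hO hC hB ha hw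
  have hhalf : φ (1/2) ∈ ℓ := by
    rw [hℓim]; exact ⟨1/2, ⟨by norm_num, by norm_num⟩, rfl⟩
  have mset_ne : ∀ a : E, (mset a).Nonempty :=
    fun a => ⟨hilbertDist Ω a (φ (1/2)), φ (1/2), hhalf, rfl⟩
  have mset_bdd : ∀ a ∈ Ω, BddBelow (mset a) := by
    intro a ha
    refine ⟨0, ?_⟩
    rintro r ⟨w, hw, rfl⟩
    rw [hbridge a ha w (hℓ hw)]
    exact HD_nonneg hO (hℓ hw)
  have m_le : ∀ a ∈ Ω, ∀ w ∈ ℓ, m a ≤ HD Ω a w := by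
    intro a ha w hw
    exact csInf_le (mset_bdd a ha) ⟨w, hw, (hbridge a ha w (hℓ hw)).symm⟩
  have proj_iff : ∀ a ∈ Ω, ∀ z : E, z ∈ hProjSet Ω ℓ a ↔ z ∈ ℓ ∧ HD Ω a z = m a := by
    intro a ha z
    constructor
    · rintro ⟨hz, he⟩
      exact ⟨hz, by rw [← hbridge a ha z (hℓ hz)]; exact he⟩
    · rintro ⟨hz, he⟩
      exact ⟨hz, by rw [hbridge a ha z (hℓ hz)]; exact he⟩
  -- the parameter set
  set S : Set ℝ := {s ∈ Ioo (0:ℝ) 1 | φ s ∈ U} with hSdef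
  have hUim : U = φ '' S := by
    apply Subset.antisymm
    · intro u hu
      have h1 : u ∈ φ '' Ioo 0 1 := by rw [← hℓim]; exact hUsub hu
      obtain ⟨s, hs, rfl⟩ := h1
      exact ⟨s, ⟨hs, hu⟩, rfl⟩
    · rintro _ ⟨s, ⟨hs, hu⟩, rfl⟩
      exact hu
  -- main step : S is order-connected
  have hSord : S.OrdConnected := by
    refine ⟨?_⟩
    rintro s₁ ⟨hs₁I, hs₁U⟩ s₂ ⟨hs₂I, hs₂U⟩ s hs
    obtain ⟨hs1le, hsle2⟩ := hs
    have hsI : s ∈ Ioo (0:ℝ) 1 := ⟨lt_of_lt_of_le hs₁I.1 hs1le, lt_of_le_of_lt hsle2 hs₂I.2⟩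
    rw [hUdef, mem_iUnion₂] at hs₁U hs₂U
    obtain ⟨x, hxA, hx₁⟩ := hs₁U
    obtain ⟨y, hyA, hy₂⟩ := hs₂U
    have hxΩ : x ∈ Ω := hA hxA
    have hyΩ : y ∈ Ω := hA hyA
    -- the path from x to y inside A
    set γ : ℝ → E := fun t => x + t • (y - x) with hγdef
    have hγcont : Continuous γ := continuous_const.add (continuous_id.smul continuous_const)
    have hγA : ∀ t ∈ Icc (0:ℝ) 1, γ t ∈ A := by
      intro t ht
      have h1 : (1 - t) • x + t • y ∈ A := hAc hxA hyA (by linarith [ht.2]) ht.1 (by ring)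
      have h2 : γ t = (1 - t) • x + t • y := by
        rw [hγdef]
        simp only [smul_sub, sub_smul, one_smul]
        abel
      rw [h2]; exact h1
    have hγΩ : ∀ t ∈ Icc (0:ℝ) 1, γ t ∈ Ω := fun t ht => hA (hγA t ht)
    set u : E := φ s with hudef
    have huℓ : u ∈ ℓ := by rw [hℓim]; exact ⟨s, hsI, rfl⟩
    have huΩ : u ∈ Ω := hℓ huℓ
    -- a tendsto helper for HD
    have HDtend : ∀ (f g : ℕ → E) (a b : E), a ∈ Ω → b ∈ Ω →
        Tendsto f atTop (𝓝 a) → Tendsto g atTop (𝓝 b) →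
        Tendsto (fun k => HD Ω (f k) (g k)) atTop (𝓝 (HD Ω a b)) := by
      intro f g a b ha hb hf hg
      have := (HD_continuousAt hO hC ha hb).tendsto.comp (hf.prodMk_nhds hg)
      exact this
    have Ggtend : ∀ (f g : ℕ → E) (a b : E), a ∈ Ω →
        Tendsto f atTop (𝓝 a) → Tendsto g atTop (𝓝 b) →
        Tendsto (fun k => Gg Ω (f k) (g k - f k)) atTop (𝓝 (Gg Ω a (b - a))) := by
      intro f g a b ha hf hg
      have hpair : Tendsto (fun k => ((f k : E), g k - f k)) atTop (𝓝 (a, b - a)) :=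
        hf.prodMk_nhds (hg.sub hf)
      have := (Gg_continuousAt hO hC ha (b - a)).tendsto.comp hpair
      exact this
    -- approach sequence towards a parameter in [0,1]
    have happrox : ∀ σ : ℝ, σ ∈ Icc (0:ℝ) 1 → ∃ σ' : ℕ → ℝ,
        (∀ k, σ' k ∈ Ioo (0:ℝ) 1) ∧ Tendsto σ' atTop (𝓝 σ) := by
      intro σ hσ
      refine ⟨fun k => σ + (1 / ((k:ℝ) + 2)) * (1/2 - σ), ?_, ?_⟩
      · intro k
        have hk2 : (0:ℝ) < (k:ℝ) + 2 := by positivity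
        have hk1 : (0:ℝ) < 1 / ((k:ℝ) + 2) := by positivity
        have hk3 : 1 / ((k:ℝ) + 2) ≤ 1/2 := by
          rw [div_le_div_iff₀ hk2 (by norm_num)]; linarith
        constructor
        · rcases le_or_gt σ (1/2) with h | h
          · nlinarith [hσ.1]
          · nlinarith [hσ.1]
        · rcases le_or_gt σ (1/2) with h | h
          · nlinarith [hσ.2]
          · nlinarith [hσ.2]
      · have hk0 : Tendsto (fun k : ℕ => 1 / ((k:ℝ) + 2)) atTop (𝓝 0) := by
          have h1 : Tendsto (fun k : ℕ => ((k:ℝ) + 2)) atTop atTop :=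
            tendsto_atTop_add_const_right atTop 2 tendsto_natCast_atTop_atTop
          simpa [Pi.inv_def] using h1.inv_tendsto_atTop
        have := (hk0.mul_const (1/2 - σ)).const_add σ
        simpa using this
    -- closedness of the attainment sets
    have key_closed : ∀ c d : ℝ, 0 ≤ c → d ≤ 1 →
        IsClosed {t : ℝ | t ∈ Icc (0:ℝ) 1 ∧ ∃ σ, σ ∈ Icc c d ∧ φ σ ∈ Ω ∧
          HD Ω (γ t) (φ σ) = m (γ t)} := by
      intro c d hc hd
      apply IsSeqClosed.isClosed
      intro tn t htn hlim
      have htI : t ∈ Icc (0:ℝ) 1 :=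
        isClosed_Icc.mem_of_tendsto hlim (Eventually.of_forall fun k => (htn k).1)
      choose σn hσmem hσΩ hσatt using fun k => (htn k).2
      obtain ⟨σs, hσsmem, ψ, hψ, hψtend⟩ := isCompact_Icc.tendsto_subseq hσmem
      have hσsI : σs ∈ Icc (0:ℝ) 1 := ⟨le_trans hc hσsmem.1, le_trans hσsmem.2 hd⟩
      have htlimψ : Tendsto (fun k => tn (ψ k)) atTop (𝓝 t) := hlim.comp hψ.tendsto_atTop
      have hγlim : Tendsto (fun k => γ (tn (ψ k))) atTop (𝓝 (γ t)) :=
        (hγcont.tendsto t).comp htlimψ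
      have hφlim : Tendsto (fun k => φ (σn (ψ k))) atTop (𝓝 (φ σs)) :=
        (hφcont.tendsto σs).comp hψtend
      have htΩ : γ t ∈ Ω := hγΩ t htI
      -- an upper bound on the infima along the subsequence
      have hDu : Tendsto (fun k => HD Ω (γ (tn (ψ k))) u) atTop (𝓝 (HD Ω (γ t) u)) :=
        HDtend _ _ _ _ htΩ huΩ hγlim tendsto_const_nhds
      set B : ℝ := HD Ω (γ t) u + 1 with hBdef
      have hev : ∀ᶠ k in atTop, HD Ω (γ (tn (ψ k))) u < B :=
        hDu.eventually_lt_const (by rw [hBdef]; linarith)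
      have hmev : ∀ᶠ k in atTop, HD Ω (γ (tn (ψ k))) (φ (σn (ψ k))) ≤ B := by
        filter_upwards [hev] with k hk
        rw [hσatt (ψ k)]
        exact le_of_lt (lt_of_le_of_lt
          (m_le (γ (tn (ψ k))) (hγΩ _ (htn (ψ k)).1) u huℓ) hk)
      -- hence the limit point of the φ σ's stays inside Ω
      have hGgev : ∀ᶠ k in atTop,
          Gg Ω (γ (tn (ψ k))) (φ (σn (ψ k)) - γ (tn (ψ k))) ≤ 1 - Real.exp (-(2 * B)) := by
        filter_upwards [hmev] with k hk
        exact Gg_le_of_HD_le hO (hσΩ (ψ k)) hk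
      have hGglim : Tendsto (fun k => Gg Ω (γ (tn (ψ k))) (φ (σn (ψ k)) - γ (tn (ψ k))))
          atTop (𝓝 (Gg Ω (γ t) (φ σs - γ t))) :=
        Ggtend _ _ _ _ htΩ hγlim hφlim
      have hGgle : Gg Ω (γ t) (φ σs - γ t) ≤ 1 - Real.exp (-(2 * B)) :=
        le_of_tendsto hGglim hGgev
      have hσsΩ : φ σs ∈ Ω := by
        have hlt : Gg Ω (γ t) (φ σs - γ t) < 1 :=
          lt_of_le_of_lt hGgle (by linarith [Real.exp_pos (-(2 * B))])
        have := mem_of_Gg_lt_one hO hC htΩ hlt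
        rwa [add_sub_cancel] at this
      -- attainment at the limit
      have hHDlim : Tendsto (fun k => HD Ω (γ (tn (ψ k))) (φ (σn (ψ k))))
          atTop (𝓝 (HD Ω (γ t) (φ σs))) :=
        HDtend _ _ _ _ htΩ hσsΩ hγlim hφlim
      have hmlim : Tendsto (fun k => m (γ (tn (ψ k)))) atTop (𝓝 (HD Ω (γ t) (φ σs))) := by
        have : (fun k => m (γ (tn (ψ k)))) = fun k => HD Ω (γ (tn (ψ k))) (φ (σn (ψ k))) := by
          funext k; rw [hσatt (ψ k)]
        rw [this]; exact hHDlim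
      -- upper estimate : limit value ≤ any distance to a point of ℓ
      have hle_all : ∀ w ∈ ℓ, HD Ω (γ t) (φ σs) ≤ HD Ω (γ t) w := by
        intro w hw
        have hwΩ : w ∈ Ω := hℓ hw
        have hwlim : Tendsto (fun k => HD Ω (γ (tn (ψ k))) w) atTop (𝓝 (HD Ω (γ t) w)) :=
          HDtend _ _ _ _ htΩ hwΩ hγlim tendsto_const_nhds
        exact le_of_tendsto_of_tendsto' hmlim hwlim
          (fun k => m_le (γ (tn (ψ k))) (hγΩ _ (htn (ψ k)).1) w hw)
      have hle : HD Ω (γ t) (φ σs) ≤ m (γ t) := by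
        apply le_csInf (mset_ne (γ t))
        rintro r ⟨w, hw, rfl⟩
        rw [hbridge (γ t) htΩ w (hℓ hw)]
        exact hle_all w hw
      -- lower estimate : m (γ t) ≤ value at σs via approach from within (0,1)
      have hge : m (γ t) ≤ HD Ω (γ t) (φ σs) := by
        obtain ⟨σ', hσ'mem, hσ'tend⟩ := happrox σs hσsI
        have hφ'lim : Tendsto (fun k => φ (σ' k)) atTop (𝓝 (φ σs)) :=
          (hφcont.tendsto σs).comp hσ'tend
        have hHD'lim : Tendsto (fun k => HD Ω (γ t) (φ (σ' k))) atTop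
            (𝓝 (HD Ω (γ t) (φ σs))) :=
          HDtend _ _ _ _ htΩ hσsΩ tendsto_const_nhds hφ'lim
        refine ge_of_tendsto hHD'lim (Eventually.of_forall fun k => ?_)
        refine m_le (γ t) htΩ (φ (σ' k)) ?_
        rw [hℓim]
        exact ⟨σ' k, hσ'mem k, rfl⟩
      exact ⟨htI, σs, hσsmem, hσsΩ, le_antisymm hle hge⟩
    -- covering : at every t the infimum is attained somewhere on [0,1]
    have key_cover : ∀ t ∈ Icc (0:ℝ) 1, ∃ σ, σ ∈ Icc (0:ℝ) 1 ∧ φ σ ∈ Ω ∧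
        HD Ω (γ t) (φ σ) = m (γ t) := by
      intro t htI
      have htΩ : γ t ∈ Ω := hγΩ t htI
      obtain ⟨r, hrmono, hrlim, hrmem⟩ :=
        exists_seq_tendsto_sInf (mset_ne (γ t)) (mset_bdd (γ t) htΩ)
      choose wn hwℓ hwr using hrmem
      have hwn : ∀ k, ∃ σ ∈ Ioo (0:ℝ) 1, φ σ = wn k := by
        intro k
        have h1 := hwℓ k
        rw [hℓim] at h1
        obtain ⟨σ, hσ, hφσ⟩ := h1
        exact ⟨σ, hσ, hφσ⟩
      choose σn hσmem hσeq using hwn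
      have hσI : ∀ k, σn k ∈ Icc (0:ℝ) 1 := fun k => ⟨(hσmem k).1.le, (hσmem k).2.le⟩
      obtain ⟨σs, hσsmem, ψ, hψ, hψtend⟩ := isCompact_Icc.tendsto_subseq hσI
      have hφlim : Tendsto (fun k => φ (σn (ψ k))) atTop (𝓝 (φ σs)) :=
        (hφcont.tendsto σs).comp hψtend
      have hrψ : Tendsto (fun k => r (ψ k)) atTop (𝓝 (m (γ t))) :=
        hrlim.comp hψ.tendsto_atTop
      have hrHD : ∀ k, r (ψ k) = HD Ω (γ t) (φ (σn (ψ k))) := by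
        intro k
        rw [hσeq (ψ k), ← hbridge (γ t) htΩ (wn (ψ k)) (hℓ (hwℓ (ψ k)))]
        exact hwr (ψ k)
      set B : ℝ := m (γ t) + 1 with hBdef
      have hev : ∀ᶠ k in atTop, r (ψ k) < B := hrψ.eventually_lt_const (by rw [hBdef]; linarith)
      have hGgev : ∀ᶠ k in atTop,
          Gg Ω (γ t) (φ (σn (ψ k)) - γ t) ≤ 1 - Real.exp (-(2 * B)) := by
        filter_upwards [hev] with k hk
        refine Gg_le_of_HD_le hO (hφΩ _ (hσmem (ψ k))) ?_
        rw [← hrHD k]; exact hk.le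
      have hGglim : Tendsto (fun k => Gg Ω (γ t) (φ (σn (ψ k)) - γ t)) atTop
          (𝓝 (Gg Ω (γ t) (φ σs - γ t))) := by
        have := Ggtend (fun _ => γ t) (fun k => φ (σn (ψ k))) (γ t) (φ σs) htΩ
          tendsto_const_nhds hφlim
        exact this
      have hGgle : Gg Ω (γ t) (φ σs - γ t) ≤ 1 - Real.exp (-(2 * B)) :=
        le_of_tendsto hGglim hGgev
      have hσsΩ : φ σs ∈ Ω := by
        have hlt : Gg Ω (γ t) (φ σs - γ t) < 1 :=
          lt_of_le_of_lt hGgle (by linarith [Real.exp_pos (-(2 * B))])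
        have := mem_of_Gg_lt_one hO hC htΩ hlt
        rwa [add_sub_cancel] at this
      have hHDlim : Tendsto (fun k => HD Ω (γ t) (φ (σn (ψ k)))) atTop
          (𝓝 (HD Ω (γ t) (φ σs))) :=
        HDtend _ _ _ _ htΩ hσsΩ tendsto_const_nhds hφlim
      have hHDlim' : Tendsto (fun k => HD Ω (γ t) (φ (σn (ψ k)))) atTop (𝓝 (m (γ t))) := by
        have : (fun k => HD Ω (γ t) (φ (σn (ψ k)))) = fun k => r (ψ k) := by
          funext k; rw [hrHD k]
        rw [this]; exact hrψ
      exact ⟨σs, hσsmem, hσsΩ, tendsto_nhds_unique hHDlim hHDlim'⟩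
    -- the two closed pieces
    set Pm : Set ℝ := {t : ℝ | t ∈ Icc (0:ℝ) 1 ∧ ∃ σ, σ ∈ Icc (0:ℝ) s ∧ φ σ ∈ Ω ∧
      HD Ω (γ t) (φ σ) = m (γ t)} with hPmdef
    set Pp : Set ℝ := {t : ℝ | t ∈ Icc (0:ℝ) 1 ∧ ∃ σ, σ ∈ Icc s 1 ∧ φ σ ∈ Ω ∧
      HD Ω (γ t) (φ σ) = m (γ t)} with hPpdef
    have hPmclosed : IsClosed Pm := key_closed 0 s le_rfl hsI.2.le
    have hPpclosed : IsClosed Pp := key_closed s 1 hsI.1.le le_rfl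
    have hcover : Icc (0:ℝ) 1 ⊆ Pm ∪ Pp := by
      intro t ht
      obtain ⟨σ, hσmem, hσΩ, hσatt⟩ := key_cover t ht
      rcases le_total σ s with h | h
      · exact Or.inl ⟨ht, σ, ⟨hσmem.1, h⟩, hσΩ, hσatt⟩
      · exact Or.inr ⟨ht, σ, ⟨h, hσmem.2⟩, hσΩ, hσatt⟩
    have hγ0 : γ 0 = x := by rw [hγdef]; simp
    have hγ1 : γ 1 = y := by rw [hγdef]; simp
    have h0P : (0:ℝ) ∈ Pm := by
      refine ⟨⟨le_rfl, zero_le_one⟩, s₁, ⟨hs₁I.1.le, hs1le⟩, hφΩ s₁ hs₁I, ?_⟩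
      rw [hγ0]
      exact ((proj_iff x hxΩ (φ s₁)).mp hx₁).2
    have h1P : (1:ℝ) ∈ Pp := by
      refine ⟨⟨zero_le_one, le_rfl⟩, s₂, ⟨hsle2, hs₂I.2.le⟩, hφΩ s₂ hs₂I, ?_⟩
      rw [hγ1]
      exact ((proj_iff y hyΩ (φ s₂)).mp hy₂).2
    -- intersecting the two pieces
    obtain ⟨t, htI, htm, htp⟩ : ∃ t, t ∈ Icc (0:ℝ) 1 ∧ t ∈ Pm ∧ t ∈ Pp := by
      have := (isPreconnected_closed_iff.mp isPreconnected_Icc) Pm Pp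
        hPmclosed hPpclosed hcover
        ⟨0, ⟨le_rfl, zero_le_one⟩, h0P⟩ ⟨1, ⟨zero_le_one, le_rfl⟩, h1P⟩
      obtain ⟨t, ht1, ht2, ht3⟩ := this
      exact ⟨t, ht1, ht2, ht3⟩
    obtain ⟨-, sm, hsmmem, hsmΩ, hsmatt⟩ := htm
    obtain ⟨-, sp, hspmem, hspΩ, hspatt⟩ := htp
    have htΩ : γ t ∈ Ω := hγΩ t htI
    have htA : γ t ∈ A := hγA t htI
    -- the projection of γ t contains u = φ s
    have hkey : HD Ω (γ t) u ≤ m (γ t) := by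
      rcases eq_or_lt_of_le (le_trans hsmmem.2 hspmem.1 : sm ≤ sp) with heq | hlt
      · -- then sm = s = sp
        have hsms : sm = s := le_antisymm hsmmem.2 (heq ▸ hspmem.1)
        rw [hudef, ← hsms, hsmatt]
      · set θ : ℝ := (s - sm) / (sp - sm) with hθdef
        have hsub : (0:ℝ) < sp - sm := sub_pos.mpr hlt
        have hθ0 : 0 ≤ θ := div_nonneg (by linarith [hsmmem.2]) hsub.le
        have hθ1 : θ ≤ 1 := by
          rw [hθdef, div_le_one hsub]; linarith [hspmem.1]
        have hθval : (1 - θ) * sm + θ * sp = s := by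
          field_simp [hθdef]
          have h' : θ * (sp - sm) = s - sm := by rw [hθdef]; exact div_mul_cancel₀ _ hsub.ne'
          linarith
        have hconv : φ s = (1 - θ) • φ sm + θ • φ sp := by
          rw [hφdef]
          simp only
          rw [← hθval]
          module
        have := HD_quasiconvex hO hC htΩ hsmΩ hspΩ hθ0 hθ1
        rw [hudef, hconv]
        rw [hsmatt, hspatt, max_self] at this
        exact this
    have hfinal : HD Ω (γ t) u = m (γ t) :=
      le_antisymm hkey (m_le (γ t) htΩ u huℓ)
    have huU : u ∈ U := by
      rw [hUdef, mem_iUnion₂]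
      exact ⟨γ t, htA, (proj_iff (γ t) htΩ u).mpr ⟨huℓ, hfinal⟩⟩
    exact ⟨hsI, huU⟩
  rw [hUim]
  exact (hSord.isPreconnected).image φ hφcont.continuousOn

end Stmt8Aux

/-- let `Ω` be a properly convex domain with Hilbert metric, and `ℓ` a projective
line segment that is a geodesic in `Ω` (an open segment with endpoints in the closure of `Ω`,
contained in `Ω`). Then for any convex `A ⊆ Ω`, the nearest-point projection `π_ℓ(A)` is a
connected subset of `ℓ`. -/
theorem stmt8 {n : ℕ} (Ω : Set (EuclideanSpace ℝ (Fin n))) (hΩ : IsProperlyConvex Ω)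
    (p q : EuclideanSpace ℝ (Fin n)) (hp : p ∈ closure Ω) (hq : q ∈ closure Ω) (hpq : p ≠ q)
    (hℓ : openSegment ℝ p q ⊆ Ω)
    (A : Set (EuclideanSpace ℝ (Fin n))) (hA : A ⊆ Ω) (hAc : Convex ℝ A) :
    IsPreconnected (⋃ a ∈ A, hProjSet Ω (openSegment ℝ p q) a) ∧
      (⋃ a ∈ A, hProjSet Ω (openSegment ℝ p q) a) ⊆ openSegment ℝ p q := by
  obtain ⟨hO, hC, hB, -⟩ := hΩ
  exact Stmt8Aux.main Ω hO hC hB p q hpq hℓ A hA hAc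
end

section
/- Let Ω_n ⊂ P(ℝ^d) be a sequence of properly convex domains converging (in Hausdorff distance of closures) to a properly convex domain Ω_∞. Suppose x_n, y_n ∈ Ω_n converge to points x, y ∈ closure(Ω_∞), and liminf_n d_{Ω_n}(x_n, y_n) < ∞. Then x and y lie in the same face F of Ω_∞ (where F = Ω_∞ itself if x ∈ Ω_∞), and d_F(x,y) ≤ liminf_n d_{Ω_n}(x_n, y_n), where d_F is the Hilbert metric of the face F viewed as a properly convex domain in its projective span. -/
/-- The open face of the convex set `K` containing the point `x` (so the face of a point
of the interior is the whole relative interior, and `openFace (closure Ω) x = Ω` for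
`x ∈ Ω` when `Ω` is open and convex). -/
def openFace {E : Type*} [NormedAddCommGroup E] [NormedSpace ℝ E] (K : Set E) (x : E) : Set E :=
  {y | y = x ∨ ∃ a ∈ K, ∃ b ∈ K, x ∈ openSegment ℝ a b ∧ y ∈ openSegment ℝ a b}

open Filter Metric Set

/-! ### Auxiliary lemmas on the cross-ratio -/

noncomputable def crossRatio (a b : ℝ) : ℝ := ((1 - a) * b) / ((-a) * (b - 1))

lemma crossRatio_eq (a b : ℝ) : crossRatio a b = ((1 - a)/(-a)) * (b/(b - 1)) := by
  unfold crossRatio; rw [div_mul_div_comm]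

lemma one_le_factor1 {a : ℝ} (ha : a < 0) : 1 ≤ (1 - a)/(-a) := by
  rw [le_div_iff₀ (by linarith)]; linarith

lemma one_le_factor2 {b : ℝ} (hb : 1 < b) : 1 ≤ b/(b - 1) := by
  rw [le_div_iff₀ (by linarith)]; linarith

lemma one_le_crossRatio {a b : ℝ} (ha : a < 0) (hb : 1 < b) : 1 ≤ crossRatio a b := by
  rw [crossRatio_eq]
  calc (1:ℝ) = 1 * 1 := by ring
  _ ≤ _ := mul_le_mul (one_le_factor1 ha) (one_le_factor2 hb) zero_le_one
      (le_trans zero_le_one (one_le_factor1 ha))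

lemma crossRatio_mono {a a' b b' : ℝ} (h1 : a' ≤ a) (ha : a < 0) (hb : 1 < b) (h2 : b ≤ b') :
    crossRatio a' b' ≤ crossRatio a b := by
  have ha' : a' < 0 := lt_of_le_of_lt h1 ha
  have hb' : 1 < b' := lt_of_lt_of_le hb h2
  rw [crossRatio_eq, crossRatio_eq]
  have e1 : (1 - a')/(-a') ≤ (1 - a)/(-a) := by
    rw [div_le_div_iff₀ (by linarith) (by linarith)]; nlinarith
  have e2 : b'/(b' - 1) ≤ b/(b - 1) := by
    rw [div_le_div_iff₀ (by linarith) (by linarith)]; nlinarith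
  exact mul_le_mul e1 e2 (le_trans zero_le_one (one_le_factor2 hb'))
    (le_trans zero_le_one (one_le_factor1 ha))

lemma chord_bounds {a b M : ℝ} (ha : a < 0) (hb : 1 < b) (hM : crossRatio a b ≤ M) :
    1 < M ∧ a ≤ -(1/(M-1)) ∧ 1 + 1/(M-1) ≤ b := by
  have h1 := one_le_factor1 ha
  have h2 := one_le_factor2 hb
  have hf1 : (1 - a)/(-a) ≤ M := by
    calc (1 - a)/(-a) = ((1 - a)/(-a)) * 1 := (mul_one _).symm
    _ ≤ ((1 - a)/(-a)) * (b/(b-1)) := mul_le_mul_of_nonneg_left h2 (by linarith)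
    _ = crossRatio a b := (crossRatio_eq a b).symm
    _ ≤ M := hM
  have hf2 : b/(b-1) ≤ M := by
    calc b/(b-1) = 1 * (b/(b-1)) := (one_mul _).symm
    _ ≤ ((1 - a)/(-a)) * (b/(b-1)) := mul_le_mul_of_nonneg_right h1 (by linarith)
    _ = crossRatio a b := (crossRatio_eq a b).symm
    _ ≤ M := hM
  have hM1 : 1 < M := by
    have : (1:ℝ) < (1 - a)/(-a) := by rw [lt_div_iff₀ (by linarith)]; linarith
    linarith
  have hMm : (0:ℝ) < M - 1 := by linarith
  refine ⟨hM1, ?_, ?_⟩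
  · have h3 : 1 - a ≤ M * (-a) := (div_le_iff₀ (by linarith)).1 hf1
    have : 1/(M-1) ≤ -a := (div_le_iff₀ hMm).2 (by nlinarith)
    linarith
  · have h4 : b ≤ M * (b - 1) := (div_le_iff₀ (by linarith)).1 hf2
    have : 1/(M-1) ≤ b - 1 := (div_le_iff₀ hMm).2 (by nlinarith)
    linarith

lemma crossRatio_tendsto {u v : ℕ → ℝ} {a b : ℝ} (hu : Tendsto u atTop (nhds a))
    (hv : Tendsto v atTop (nhds b)) (ha : a < 0) (hb : 1 < b) :
    Tendsto (fun j => crossRatio (u j) (v j)) atTop (nhds (crossRatio a b)) := by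
  unfold crossRatio
  exact Tendsto.div ((tendsto_const_nhds.sub hu).mul hv)
    ((hu.neg).mul (hv.sub tendsto_const_nhds))
    (ne_of_gt (mul_pos (by linarith) (by linarith)))

/-! ### Auxiliary lemmas on chord sets -/

section Chord
variable {E : Type*} [NormedAddCommGroup E] [NormedSpace ℝ E]

/-- The set of parameters of the chord of `Ω` through `p` and `q`. -/
def chordSet (Ω : Set E) (x y : E) : Set ℝ := {t : ℝ | x + t • (y - x) ∈ Ω}

lemma hilbertDist_eq {Ω : Set E} {p q : E} (h : p ≠ q) :
    hilbertDist Ω p q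
      = (1/2) * Real.log (crossRatio (sInf (chordSet Ω p q)) (sSup (chordSet Ω p q))) := by
  unfold hilbertDist; rw [if_neg h]; rfl

lemma chordSet_abs_le {Ω : Set E} {R : ℝ} (hb : ∀ z ∈ Ω, ‖z‖ ≤ R) {p q : E} (hpq : p ≠ q)
    {t : ℝ} (ht : t ∈ chordSet Ω p q) : |t| ≤ (R + ‖p‖) / ‖q - p‖ := by
  have hqp : (0:ℝ) < ‖q - p‖ := by
    rw [norm_pos_iff, sub_ne_zero]; exact fun h' => hpq h'.symm
  rw [le_div_iff₀ hqp]
  have h1 : ‖t • (q - p)‖ ≤ R + ‖p‖ := by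
    calc ‖t • (q - p)‖ = ‖(p + t • (q - p)) - p‖ := by rw [add_sub_cancel_left]
    _ ≤ ‖p + t • (q - p)‖ + ‖p‖ := norm_sub_le _ _
    _ ≤ R + ‖p‖ := by have := hb _ ht; linarith
  rwa [norm_smul, Real.norm_eq_abs] at h1

lemma chordSet_convex {Ω : Set E} (hc : Convex ℝ Ω) (p q : E) : Convex ℝ (chordSet Ω p q) := by
  intro t1 h1 t2 h2 a b ha hb hab
  show p + (a • t1 + b • t2) • (q - p) ∈ Ω
  obtain rfl : b = 1 - a := by linarith
  have : p + (a • t1 + (1-a) • t2) • (q - p)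
      = a • (p + t1 • (q - p)) + (1-a) • (p + t2 • (q - p)) := by
    match_scalars <;> simp only [smul_eq_mul] <;> ring
  rw [this]
  exact hc h1 h2 ha hb hab

lemma chordSet_isOpen {Ω : Set E} (ho : IsOpen Ω) (p q : E) : IsOpen (chordSet Ω p q) :=
  ho.preimage (by continuity)

lemma zero_mem_chordSet {Ω : Set E} {p q : E} (hp : p ∈ Ω) : (0:ℝ) ∈ chordSet Ω p q := by
  show p + (0:ℝ) • (q - p) ∈ Ω; simpa using hp

lemma one_mem_chordSet {Ω : Set E} {p q : E} (hq : q ∈ Ω) : (1:ℝ) ∈ chordSet Ω p q := by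
  show p + (1:ℝ) • (q - p) ∈ Ω; simpa using hq

lemma chordSet_bddBelow {Ω : Set E} {R : ℝ} (hb : ∀ z ∈ Ω, ‖z‖ ≤ R) {p q : E} (hpq : p ≠ q) :
    BddBelow (chordSet Ω p q) :=
  ⟨-((R + ‖p‖) / ‖q - p‖), fun _ ht => neg_le_of_abs_le (chordSet_abs_le hb hpq ht)⟩

lemma chordSet_bddAbove {Ω : Set E} {R : ℝ} (hb : ∀ z ∈ Ω, ‖z‖ ≤ R) {p q : E} (hpq : p ≠ q) :
    BddAbove (chordSet Ω p q) :=
  ⟨(R + ‖p‖) / ‖q - p‖, fun _ ht => le_of_abs_le (chordSet_abs_le hb hpq ht)⟩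

lemma sInf_chordSet_neg {Ω : Set E} {R : ℝ} (ho : IsOpen Ω) (hb : ∀ z ∈ Ω, ‖z‖ ≤ R)
    {p q : E} (hp : p ∈ Ω) (hpq : p ≠ q) : sInf (chordSet Ω p q) < 0 := by
  have h0 : (0:ℝ) ∈ chordSet Ω p q := zero_mem_chordSet hp
  obtain ⟨ε, hε, hball⟩ := Metric.isOpen_iff.1 (chordSet_isOpen ho p q) 0 h0
  have hm : -(ε/2) ∈ chordSet Ω p q := by
    apply hball
    rw [mem_ball, Real.dist_eq, sub_zero, abs_neg, abs_of_pos (by linarith : (0:ℝ) < ε/2)]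
    linarith
  calc sInf (chordSet Ω p q) ≤ -(ε/2) := csInf_le (chordSet_bddBelow hb hpq) hm
  _ < 0 := by linarith

lemma sSup_chordSet_gt_one {Ω : Set E} {R : ℝ} (ho : IsOpen Ω) (hb : ∀ z ∈ Ω, ‖z‖ ≤ R)
    {p q : E} (hq : q ∈ Ω) (hpq : p ≠ q) : 1 < sSup (chordSet Ω p q) := by
  have h1 : (1:ℝ) ∈ chordSet Ω p q := one_mem_chordSet hq
  obtain ⟨ε, hε, hball⟩ := Metric.isOpen_iff.1 (chordSet_isOpen ho p q) 1 h1
  have hm : 1 + ε/2 ∈ chordSet Ω p q := by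
    apply hball
    rw [mem_ball, Real.dist_eq, add_sub_cancel_left, abs_of_pos (by linarith : (0:ℝ) < ε/2)]
    linarith
  calc (1:ℝ) < 1 + ε/2 := by linarith
  _ ≤ sSup (chordSet Ω p q) := le_csSup (chordSet_bddAbove hb hpq) hm

lemma chordSet_endpoint_mem_closure_inf {Ω : Set E} {R : ℝ} (hb : ∀ z ∈ Ω, ‖z‖ ≤ R)
    {p q : E} (hp : p ∈ Ω) (hpq : p ≠ q) :
    p + (sInf (chordSet Ω p q)) • (q - p) ∈ closure Ω := by
  have h := csInf_mem_closure (s := chordSet Ω p q) ⟨0, zero_mem_chordSet hp⟩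
    (chordSet_bddBelow hb hpq)
  exact map_mem_closure (f := fun t : ℝ => p + t • (q - p)) (by continuity) h (fun t ht => ht)

lemma chordSet_endpoint_mem_closure_sup {Ω : Set E} {R : ℝ} (hb : ∀ z ∈ Ω, ‖z‖ ≤ R)
    {p q : E} (hp : p ∈ Ω) (hpq : p ≠ q) :
    p + (sSup (chordSet Ω p q)) • (q - p) ∈ closure Ω := by
  have h := csSup_mem_closure (s := chordSet Ω p q) ⟨0, zero_mem_chordSet hp⟩
    (chordSet_bddAbove hb hpq)
  exact map_mem_closure (f := fun t : ℝ => p + t • (q - p)) (by continuity) h (fun t ht => ht)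

lemma mem_openSegment_param {x y : E} {α β t : ℝ} (h1 : α < t) (h2 : t < β) :
    x + t • (y - x) ∈ openSegment ℝ (x + α • (y - x)) (x + β • (y - x)) := by
  have hβα : (0:ℝ) < β - α := by linarith
  refine ⟨(β - t)/(β - α), (t - α)/(β - α), div_pos (by linarith) hβα,
    div_pos (by linarith) hβα, ?_, ?_⟩
  · field_simp; ring
  · match_scalars <;> field_simp <;> ring

lemma openFace_subset {K : Set E} (hK : Convex ℝ K) {x : E} (hx : x ∈ K) :
    openFace K x ⊆ K := by
  rintro z (rfl | ⟨a, ha, b, hb, -, hz⟩)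
  · exact hx
  · exact hK.segment_subset ha hb (openSegment_subset_segment ℝ a b hz)

lemma hilbertDist_nonneg {Ω : Set E} (h : IsProperlyConvex Ω) {p q : E}
    (hp : p ∈ Ω) (hq : q ∈ Ω) : 0 ≤ hilbertDist Ω p q := by
  by_cases hpq : p = q
  · simp [hilbertDist, hpq]
  · obtain ⟨R, hR⟩ := isBounded_iff_forall_norm_le.1 h.2.2.1
    rw [hilbertDist_eq hpq]
    have h1 := one_le_crossRatio (sInf_chordSet_neg h.1 hR hp hpq)
      (sSup_chordSet_gt_one h.1 hR hq hpq)
    have := Real.log_nonneg h1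
    linarith

end Chord

/-- if properly convex domains `Ω n` converge (Hausdorff distance of closures)
to `Ω∞`, points `x n, y n ∈ Ω n` converge to `x, y ∈ closure Ω∞`, and
`liminf d_{Ω n}(x n, y n) < ∞` (i.e. the distances are frequently bounded), then `x` and `y`
lie in the same face `F` of `Ω∞` and `d_F(x,y) ≤ liminf d_{Ω n}(x n, y n)`. -/
theorem stmt10 {n : ℕ} (Ω : ℕ → Set (EuclideanSpace ℝ (Fin n)))
    (Ωinf : Set (EuclideanSpace ℝ (Fin n)))
    (hΩ : ∀ k, IsProperlyConvex (Ω k)) (hinf : IsProperlyConvex Ωinf)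
    (hconv : Tendsto (fun k => Metric.hausdorffDist (closure (Ω k)) (closure Ωinf))
      atTop (nhds 0))
    (xs ys : ℕ → EuclideanSpace ℝ (Fin n)) (x y : EuclideanSpace ℝ (Fin n))
    (hxs : ∀ k, xs k ∈ Ω k) (hys : ∀ k, ys k ∈ Ω k)
    (hx : Tendsto xs atTop (nhds x)) (hy : Tendsto ys atTop (nhds y))
    (hxcl : x ∈ closure Ωinf) (hycl : y ∈ closure Ωinf)
    (C : ℝ) (hbd : ∃ᶠ k in atTop, hilbertDist (Ω k) (xs k) (ys k) ≤ C) :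
    y ∈ openFace (closure Ωinf) x ∧
      hilbertDist (openFace (closure Ωinf) x) x y ≤
        liminf (fun k => hilbertDist (Ω k) (xs k) (ys k)) atTop := by
  set T := closure Ωinf with hT
  set F := openFace T x with hFdef
  set d : ℕ → ℝ := fun k => hilbertDist (Ω k) (xs k) (ys k) with hddef
  set L := liminf d atTop with hLdef
  have hdnn : ∀ k, 0 ≤ d k := fun k => hilbertDist_nonneg (hΩ k) (hxs k) (hys k)
  have cobdd : IsCoboundedUnder (· ≥ ·) atTop d := IsCoboundedUnder.of_frequently_le hbd
  have hL0 : 0 ≤ L := le_liminf_of_le cobdd (Eventually.of_forall hdnn)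
  by_cases hxy : x = y
  · subst hxy
    refine ⟨Or.inl rfl, ?_⟩
    simpa [hilbertDist] using hL0
  -- global data about T
  have hTne : T.Nonempty := hinf.2.2.2.closure
  have hTbd : Bornology.IsBounded T := hinf.2.2.1.closure
  obtain ⟨R0, hR0⟩ := isBounded_iff_forall_norm_le.1 hTbd
  have hTconv : Convex ℝ T := hinf.2.1.closure
  have hTclosed : IsClosed T := isClosed_closure
  have hedist : ∀ k, EMetric.hausdorffEdist (closure (Ω k)) T ≠ ⊤ := fun k =>
    Metric.hausdorffEdist_ne_top_of_nonempty_of_bounded ((hΩ k).2.2.2.closure) hTne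
      ((hΩ k).2.2.1.closure) hTbd
  -- limits of points of the domains lie in T
  have hlimmem : ∀ (σ : ℕ → ℕ), Tendsto σ atTop atTop →
      ∀ (zs : ℕ → EuclideanSpace ℝ (Fin n)) (z : EuclideanSpace ℝ (Fin n)),
      (∀ j, zs j ∈ closure (Ω (σ j))) → Tendsto zs atTop (nhds z) → z ∈ T := by
    intro σ hσ zs z hzs hz
    have h1 : ∀ j, infDist (zs j) T ≤ hausdorffDist (closure (Ω (σ j))) T := fun j =>
      infDist_le_hausdorffDist_of_mem (hzs j) (hedist _)
    have h2 : Tendsto (fun j => infDist (zs j) T) atTop (nhds 0) :=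
      squeeze_zero (fun _ => infDist_nonneg) h1 (hconv.comp hσ)
    have h3 : Tendsto (fun j => infDist (zs j) T) atTop (nhds (infDist z T)) :=
      ((continuous_infDist_pt T).tendsto z).comp hz
    exact (hTclosed.mem_iff_infDist_zero hTne).2 (tendsto_nhds_unique h3 h2)
  -- eventual separation and boundedness
  have hδ0 : (0:ℝ) < ‖y - x‖ := by
    rw [norm_pos_iff, sub_ne_zero]; exact fun h => hxy h.symm
  set δ := ‖y - x‖ / 2 with hδdef
  have hδpos : 0 < δ := by positivity
  have hnormt : Tendsto (fun k => ‖ys k - xs k‖) atTop (nhds ‖y - x‖) := (hy.sub hx).norm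
  have hev1 : ∀ᶠ k in atTop, δ ≤ ‖ys k - xs k‖ :=
    hnormt.eventually (eventually_ge_nhds (by rw [hδdef]; linarith))
  set R : ℝ := R0 + 2 with hRdef
  have hevR : ∀ᶠ k in atTop, ∀ z ∈ Ω k, ‖z‖ ≤ R := by
    have h1 : ∀ᶠ k in atTop, hausdorffDist (closure (Ω k)) T < 1 :=
      hconv.eventually (eventually_lt_nhds one_pos)
    filter_upwards [h1] with k hk z hz
    have h2 : infDist z T ≤ hausdorffDist (closure (Ω k)) T :=
      infDist_le_hausdorffDist_of_mem (subset_closure hz) (hedist k)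
    have h3 : infDist z T < 2 := by linarith
    obtain ⟨w, hw, hdw⟩ := (infDist_lt_iff hTne).1 h3
    have h4 : ‖z‖ ≤ ‖w‖ + ‖z - w‖ := by
      conv_lhs => rw [show z = w + (z - w) by abel]
      exact norm_add_le _ _
    rw [dist_eq_norm] at hdw
    have := hR0 w hw
    rw [hRdef]; linarith
  set B0 : ℝ := (R + R) / δ with hB0def
  -- the key quantitative step, for every ε > 0
  have key : ∀ ε : ℝ, 0 < ε → y ∈ F ∧ hilbertDist F x y ≤ L + ε := by
    intro ε hε
    set M := Real.exp (2 * (L + ε)) with hMdef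
    have hM1 : 1 < M := by
      rw [hMdef]
      calc (1:ℝ) = Real.exp 0 := Real.exp_zero.symm
      _ < _ := Real.exp_lt_exp.2 (by linarith)
    set m := 1 / (M - 1) with hmdef
    have hm0 : 0 < m := by rw [hmdef]; exact div_pos one_pos (by linarith)
    have freq : ∃ᶠ k in atTop, d k < L + ε :=
      frequently_lt_of_liminf_lt cobdd (by linarith)
    obtain ⟨φ, hφmono, hφ⟩ := extraction_of_frequently_atTop (freq.and_eventually
      (hev1.and hevR))
    set A : ℕ → ℝ := fun j => sInf (chordSet (Ω (φ j)) (xs (φ j)) (ys (φ j))) with hAdef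
    set Bs : ℕ → ℝ := fun j => sSup (chordSet (Ω (φ j)) (xs (φ j)) (ys (φ j))) with hBsdef
    have hfacts : ∀ j, A j < 0 ∧ 1 < Bs j ∧ crossRatio (A j) (Bs j) ≤ M ∧
        (A j ≤ -m ∧ -B0 ≤ A j) ∧ (1 + m ≤ Bs j ∧ Bs j ≤ B0) ∧
        xs (φ j) + (A j) • (ys (φ j) - xs (φ j)) ∈ closure (Ω (φ j)) ∧
        xs (φ j) + (Bs j) • (ys (φ j) - xs (φ j)) ∈ closure (Ω (φ j)) := by
      intro j
      obtain ⟨hdj, hsep, hRk⟩ := hφ j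
      have hne : xs (φ j) ≠ ys (φ j) := by
        intro h
        rw [h, sub_self, norm_zero] at hsep
        linarith
      have hA0 : A j < 0 := sInf_chordSet_neg (hΩ _).1 hRk (hxs _) hne
      have hB1 : 1 < Bs j := sSup_chordSet_gt_one (hΩ _).1 hRk (hys _) hne
      have hcr : crossRatio (A j) (Bs j) ≤ M := by
        have h1 : (1:ℝ) ≤ crossRatio (A j) (Bs j) := one_le_crossRatio hA0 hB1
        have h2 : d (φ j) = (1/2) * Real.log (crossRatio (A j) (Bs j)) := hilbertDist_eq hne
        have h3 : Real.log (crossRatio (A j) (Bs j)) < 2 * (L + ε) := by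
          rw [h2] at hdj; linarith
        have h4 : crossRatio (A j) (Bs j) = Real.exp (Real.log (crossRatio (A j) (Bs j))) :=
          (Real.exp_log (by linarith)).symm
        rw [hMdef, h4]
        exact le_of_lt (Real.exp_lt_exp.2 h3)
      obtain ⟨-, hAm, hBm⟩ := chord_bounds hA0 hB1 hcr
      have habs : ∀ t ∈ chordSet (Ω (φ j)) (xs (φ j)) (ys (φ j)), |t| ≤ B0 := by
        intro t ht
        refine le_trans (chordSet_abs_le hRk hne ht) ?_
        rw [hB0def]
        have hxR : ‖xs (φ j)‖ ≤ R := hRk _ (hxs _)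
        have hRpos : (0:ℝ) ≤ R := le_trans (norm_nonneg _) hxR
        exact div_le_div₀ (by linarith) (by linarith) hδpos hsep
      have hbl : -B0 ≤ A j := le_csInf ⟨0, zero_mem_chordSet (hxs _)⟩
        (fun t ht => neg_le_of_abs_le (habs t ht))
      have hbu : Bs j ≤ B0 := csSup_le ⟨0, zero_mem_chordSet (hxs _)⟩
        (fun t ht => le_of_abs_le (habs t ht))
      exact ⟨hA0, hB1, hcr, ⟨by rw [hmdef]; exact hAm, hbl⟩, ⟨by rw [hmdef]; exact hBm, hbu⟩,
        chordSet_endpoint_mem_closure_inf hRk (hxs _) hne,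
        chordSet_endpoint_mem_closure_sup hRk (hxs _) hne⟩
    -- extract convergent subsequence of the chord parameters
    have hKcpt : IsCompact ((Icc (-B0) (-m)) ×ˢ (Icc (1 + m) B0)) :=
      isCompact_Icc.prod isCompact_Icc
    have hmem : ∀ j, (A j, Bs j) ∈ (Icc (-B0) (-m)) ×ˢ (Icc (1 + m) B0) := fun j =>
      ⟨⟨(hfacts j).2.2.2.1.2, (hfacts j).2.2.2.1.1⟩, ⟨(hfacts j).2.2.2.2.1.1,
        (hfacts j).2.2.2.2.1.2⟩⟩
    obtain ⟨p, hpK, ψ, hψmono, hψt⟩ := hKcpt.tendsto_subseq hmem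
    have hAt : Tendsto (fun j => A (ψ j)) atTop (nhds p.1) :=
      (continuous_fst.tendsto p).comp hψt
    have hBt : Tendsto (fun j => Bs (ψ j)) atTop (nhds p.2) :=
      (continuous_snd.tendsto p).comp hψt
    have hαneg : p.1 < 0 := lt_of_le_of_lt hpK.1.2 (by linarith)
    have hβ1 : 1 < p.2 := lt_of_lt_of_le (by linarith) hpK.2.1
    set σ : ℕ → ℕ := fun j => φ (ψ j) with hσdef
    have hσ : Tendsto σ atTop atTop := (hφmono.comp hψmono).tendsto_atTop
    have hx' : Tendsto (fun j => xs (σ j)) atTop (nhds x) := hx.comp hσ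
    have hy' : Tendsto (fun j => ys (σ j)) atTop (nhds y) := hy.comp hσ
    set a := x + p.1 • (y - x) with hadef
    set b := x + p.2 • (y - x) with hbdef
    have haT : a ∈ T := by
      refine hlimmem σ hσ (fun j => xs (σ j) + (A (ψ j)) • (ys (σ j) - xs (σ j))) a
        (fun j => (hfacts (ψ j)).2.2.2.2.2.1) ?_
      exact hx'.add (hAt.smul (hy'.sub hx'))
    have hbT : b ∈ T := by
      refine hlimmem σ hσ (fun j => xs (σ j) + (Bs (ψ j)) • (ys (σ j) - xs (σ j))) b
        (fun j => (hfacts (ψ j)).2.2.2.2.2.2) ?_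
      exact hx'.add (hBt.smul (hy'.sub hx'))
    have hxseg : x ∈ openSegment ℝ a b := by
      have := mem_openSegment_param (x := x) (y := y) hαneg (by linarith : (0:ℝ) < p.2)
      simpa using this
    have hyseg : y ∈ openSegment ℝ a b := by
      have := mem_openSegment_param (x := x) (y := y) (by linarith : p.1 < 1) hβ1
      simpa using this
    have hyF : y ∈ F := Or.inr ⟨a, haT, b, hbT, hxseg, hyseg⟩
    refine ⟨hyF, ?_⟩
    -- compare with the chord of the face
    have hsub : Ioo p.1 p.2 ⊆ chordSet F x y := by
      intro t ht
      exact Or.inr ⟨a, haT, b, hbT, hxseg, mem_openSegment_param ht.1 ht.2⟩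
    have hFT : F ⊆ T := openFace_subset hTconv hxcl
    have hFR : ∀ z ∈ F, ‖z‖ ≤ R0 := fun z hz => hR0 z (hFT hz)
    have hp12 : p.1 < p.2 := by linarith
    have hIne : (Ioo p.1 p.2).Nonempty := nonempty_Ioo.2 hp12
    have hα'le : sInf (chordSet F x y) ≤ p.1 := by
      have := csInf_le_csInf (chordSet_bddBelow hFR hxy) hIne hsub
      rwa [csInf_Ioo hp12] at this
    have hβ'ge : p.2 ≤ sSup (chordSet F x y) := by
      have := csSup_le_csSup (chordSet_bddAbove hFR hxy) hIne hsub
      rwa [csSup_Ioo hp12] at this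
    have hcr' : crossRatio (sInf (chordSet F x y)) (sSup (chordSet F x y))
        ≤ crossRatio p.1 p.2 := crossRatio_mono hα'le hαneg hβ1 hβ'ge
    have hcrlim : crossRatio p.1 p.2 ≤ M :=
      le_of_tendsto (crossRatio_tendsto hAt hBt hαneg hβ1)
        (Eventually.of_forall fun j => (hfacts (ψ j)).2.2.1)
    have hcr1 : (1:ℝ) ≤ crossRatio (sInf (chordSet F x y)) (sSup (chordSet F x y)) :=
      one_le_crossRatio (lt_of_le_of_lt hα'le hαneg) (lt_of_lt_of_le hβ1 hβ'ge)
    rw [hilbertDist_eq hxy]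
    have hlog : Real.log (crossRatio (sInf (chordSet F x y)) (sSup (chordSet F x y)))
        ≤ Real.log M := Real.log_le_log (by linarith) (le_trans hcr' hcrlim)
    rw [hMdef, Real.log_exp] at hlog
    linarith
  exact ⟨(key 1 one_pos).1, le_of_forall_pos_le_add fun ε hε => (key ε hε).2⟩
end

section
/- Let Ω ⊂ P(ℝ^d) be a properly convex domain, x₊, x₋ ∈ closure(Ω) with the open segment (x₊, x₋) contained in Ω, and let y₊ ∈ F_Ω(x₊), y₋ ∈ F_Ω(x₋) lie in the faces of x₊, x₋ respectively. Then the open segment (y₊, y₋) is contained in Ω, and the Hausdorff distance (w.r.t. the Hilbert metric of Ω) between (y₊,y₋) and (x₊,x₋) is at most max( d_{F_Ω(x₊)}(x₊,y₊), d_{F_Ω(x₋)}(x₋,y₋) ). -/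
section Aux
variable {E : Type*} [NormedAddCommGroup E] [NormedSpace ℝ E]

private lemma ratio_ge_one {A B : ℝ} (hA : A < 0) (hB : 1 < B) :
    1 ≤ ((1 - A) * B) / ((-A) * (B - 1)) := by
  rw [le_div_iff₀ (by nlinarith)]
  nlinarith

private lemma ratio_mono {a A B b : ℝ} (h1 : a ≤ A) (h2 : A < 0) (h3 : 1 < B) (h4 : B ≤ b) :
    ((1 - a) * b) / ((-a) * (b - 1)) ≤ ((1 - A) * B) / ((-A) * (B - 1)) := by
  have ha : a < 0 := lt_of_le_of_lt h1 h2
  have hb : 1 < b := lt_of_lt_of_le h3 h4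
  have f1 : (1 - a) * (-A) ≤ (1 - A) * (-a) := by nlinarith
  have f2 : b * (B - 1) ≤ B * (b - 1) := by nlinarith
  rw [div_le_div_iff₀ (by nlinarith) (by nlinarith)]
  nlinarith [mul_le_mul f1 f2 (by nlinarith) (by nlinarith)]

private lemma segParam_bdd {Ω : Set E} (hb : Bornology.IsBounded Ω)
    {u v : E} (hne : u ≠ v) :
    BddBelow {t : ℝ | u + t • (v - u) ∈ Ω} ∧ BddAbove {t : ℝ | u + t • (v - u) ∈ Ω} := by
  obtain ⟨R, hR⟩ := isBounded_iff_forall_norm_le.mp hb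
  have hd : (0:ℝ) < ‖v - u‖ := by
    rw [norm_pos_iff]
    exact sub_ne_zero.mpr (Ne.symm hne)
  have key : ∀ t ∈ {t : ℝ | u + t • (v - u) ∈ Ω}, |t| ≤ (R + ‖u‖) / ‖v - u‖ := by
    intro t ht
    rw [le_div_iff₀ hd]
    have h1 : ‖u + t • (v - u)‖ ≤ R := hR _ ht
    have h2 : ‖t • (v - u)‖ = |t| * ‖v - u‖ := by rw [norm_smul, Real.norm_eq_abs]
    have h3 : ‖t • (v - u)‖ ≤ ‖u + t • (v - u)‖ + ‖u‖ := by
      have h4 : t • (v - u) = (u + t • (v - u)) - u := by abel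
      nth_rewrite 1 [h4]
      exact norm_sub_le (u + t • (v - u)) u
    linarith
  constructor
  · exact ⟨-((R + ‖u‖) / ‖v - u‖), fun t ht => (abs_le.mp (key t ht)).1⟩
  · exact ⟨(R + ‖u‖) / ‖v - u‖, fun t ht => (abs_le.mp (key t ht)).2⟩

end Aux
section Aux2
variable {E : Type*} [NormedAddCommGroup E] [NormedSpace ℝ E]

private lemma chord_bound {Ω : Set E} (hΩ : IsProperlyConvex Ω) {u v : E}
    (hu : u ∈ Ω) (hv : v ∈ Ω) {A B : ℝ} (hA : A < 0) (hB : 1 < B)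
    (hEA : u + A • (v - u) ∈ closure Ω) (hEB : u + B • (v - u) ∈ closure Ω) :
    hilbertDist Ω u v ≤ (1 / 2) * Real.log (((1 - A) * B) / ((-A) * (B - 1))) := by
  obtain ⟨hopen, hconv, hbdd, -⟩ := hΩ
  by_cases h : u = v
  · rw [hilbertDist, if_pos h]
    exact mul_nonneg (by norm_num) (Real.log_nonneg (ratio_ge_one hA hB))
  · rw [hilbertDist, if_neg h]
    set S := {t : ℝ | u + t • (v - u) ∈ Ω} with hS
    obtain ⟨hbb, hba⟩ := segParam_bdd hbdd h
    have hioo : Set.Ioo A B ⊆ S := by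
      intro t ht
      rcases le_or_gt t 0 with h0 | h0
      · have hθ0 : 0 ≤ t / A := by rw [le_div_iff_of_neg hA]; nlinarith
        have hθ1 : t / A < 1 := by
          rw [div_lt_iff_of_neg hA]; nlinarith [ht.1]
        have hcomb : (1 - t / A) • u + (t / A) • (u + A • (v - u)) = u + t • (v - u) := by
          match_scalars <;> field_simp [hA.ne] <;> ring
        have hmem := hconv.combo_interior_closure_mem_interior (a := 1 - t/A) (b := t/A)
          (show u ∈ interior Ω by rwa [hopen.interior_eq]) hEA (by linarith) hθ0 (by ring)
        rw [hcomb, hopen.interior_eq] at hmem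
        exact hmem
      · have hθ0 : 0 ≤ t / B := le_of_lt (div_pos h0 (by linarith))
        have hθ1 : t / B < 1 := by
          rw [div_lt_one (by linarith)]; exact ht.2
        have hcomb : (1 - t / B) • u + (t / B) • (u + B • (v - u)) = u + t • (v - u) := by
          have hB0 : B ≠ 0 := by linarith
          match_scalars <;> field_simp [hB0] <;> ring
        have hmem := hconv.combo_interior_closure_mem_interior (a := 1 - t/B) (b := t/B)
          (show u ∈ interior Ω by rwa [hopen.interior_eq]) hEB (by linarith) hθ0 (by ring)
        rw [hcomb, hopen.interior_eq] at hmem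
        exact hmem
    have hAB : A < B := by linarith
    have hinf : sInf S ≤ A := by
      have h1 : sInf S ≤ sInf (Set.Ioo A B) := csInf_le_csInf hbb (Set.nonempty_Ioo.2 hAB) hioo
      rwa [csInf_Ioo hAB] at h1
    have hsup : B ≤ sSup S := by
      have h1 : sSup (Set.Ioo A B) ≤ sSup S := csSup_le_csSup hba (Set.nonempty_Ioo.2 hAB) hioo
      rwa [csSup_Ioo hAB] at h1
    have hmono := ratio_mono hinf hA hB hsup
    have hpos : (0:ℝ) < ((1 - sInf S) * sSup S) / ((-sInf S) * (sSup S - 1)) :=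
      lt_of_lt_of_le one_pos (ratio_ge_one (lt_of_le_of_lt hinf hA) (lt_of_lt_of_le hB hsup))
    have hlog := Real.log_le_log hpos hmono
    linarith

private lemma hilbertDist_nonneg_s11 {Ω : Set E} (hΩ : IsProperlyConvex Ω) {u v : E}
    (hu : u ∈ Ω) (hv : v ∈ Ω) : 0 ≤ hilbertDist Ω u v := by
  obtain ⟨hopen, hconv, hbdd, -⟩ := hΩ
  by_cases h : u = v
  · rw [hilbertDist, if_pos h]
  · rw [hilbertDist, if_neg h]
    set S := {t : ℝ | u + t • (v - u) ∈ Ω} with hS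
    obtain ⟨hbb, hba⟩ := segParam_bdd hbdd h
    have hSopen : IsOpen S := by
      have hc : Continuous fun t : ℝ => u + t • (v - u) := by continuity
      exact hopen.preimage hc
    have h0 : (0:ℝ) ∈ S := by
      have : u + (0:ℝ) • (v - u) = u := by simp
      simpa [hS, this] using hu
    have h1 : (1:ℝ) ∈ S := by
      have h2 : u + (1:ℝ) • (v - u) = v := by module
      show u + (1:ℝ) • (v - u) ∈ Ω
      rw [h2]; exact hv
    obtain ⟨ε0, hε0, hball0⟩ := Metric.isOpen_iff.mp hSopen 0 h0
    obtain ⟨ε1, hε1, hball1⟩ := Metric.isOpen_iff.mp hSopen 1 h1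
    have hm0 : -(ε0/2) ∈ S := by
      apply hball0
      rw [Metric.mem_ball, Real.dist_eq]
      rw [show -(ε0/2) - 0 = -(ε0/2) by ring, abs_neg, abs_of_nonneg (by linarith)]
      linarith
    have hm1 : 1 + ε1/2 ∈ S := by
      apply hball1
      rw [Metric.mem_ball, Real.dist_eq]
      rw [show 1 + ε1/2 - 1 = ε1/2 by ring, abs_of_nonneg (by linarith)]
      linarith
    have hinf : sInf S ≤ -(ε0/2) := csInf_le hbb hm0
    have hsup : 1 + ε1/2 ≤ sSup S := le_csSup hba hm1
    exact mul_nonneg (by norm_num)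
      (Real.log_nonneg (ratio_ge_one (by linarith) (by linarith)))

end Aux2
section Aux3
variable {E : Type*} [NormedAddCommGroup E] [NormedSpace ℝ E]

private lemma openFace_subset_closure {Ω : Set E} (hΩ : IsProperlyConvex Ω) {x : E}
    (hx : x ∈ closure Ω) : openFace (closure Ω) x ⊆ closure Ω := by
  rintro y (rfl | ⟨a, ha, b, hb, -, hy⟩)
  · exact hx
  · exact hΩ.2.1.closure.segment_subset ha hb (openSegment_subset_segment ℝ a b hy)

private lemma face_rep {K : Set E} {x y : E} (hy : y ∈ openFace K x) :
    y = x ∨ ∃ c ∈ K, ∃ s : ℝ, 0 < s ∧ s < 1 ∧ y = x + s • (c - x) := by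
  rcases hy with h | ⟨a, ha, b, hb, hxab, hyab⟩
  · exact Or.inl h
  obtain ⟨p, q, hp, hq, hpq, hxe⟩ := hxab
  obtain ⟨p', q', hp', hq', hpq', hye⟩ := hyab
  obtain rfl : p = 1 - q := by linarith
  obtain rfl : p' = 1 - q' := by linarith
  rcases lt_trichotomy q' q with h | h | h
  · refine Or.inr ⟨a, ha, (q - q')/q, div_pos (by linarith) hq, ?_, ?_⟩
    · rw [div_lt_one hq]; linarith
    · rw [← hxe, ← hye]; match_scalars <;> field_simp [hq.ne'] <;> ring
  · left; rw [← hye, ← hxe, h]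
  · refine Or.inr ⟨b, hb, (q' - q)/(1 - q), div_pos (by linarith) (by linarith), ?_, ?_⟩
    · rw [div_lt_one (by linarith)]; linarith
    · have hq1 : (1:ℝ) - q ≠ 0 := by linarith
      rw [← hxe, ← hye]; match_scalars <;> field_simp [hq1] <;> ring

private lemma face_chord {Ω : Set E} (hΩ : IsProperlyConvex Ω) {x y : E}
    (hx : x ∈ closure Ω) (hy : y ∈ openFace (closure Ω) x) (hyx : y ≠ x) :
    sInf {t : ℝ | x + t • (y - x) ∈ openFace (closure Ω) x} < 0 ∧
    1 < sSup {t : ℝ | x + t • (y - x) ∈ openFace (closure Ω) x} ∧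
    x + (sInf {t : ℝ | x + t • (y - x) ∈ openFace (closure Ω) x}) • (y - x) ∈ closure Ω ∧
    x + (sSup {t : ℝ | x + t • (y - x) ∈ openFace (closure Ω) x}) • (y - x) ∈ closure Ω := by
  have hFsub : openFace (closure Ω) x ⊆ closure Ω := openFace_subset_closure hΩ hx
  have hFbdd : Bornology.IsBounded (openFace (closure Ω) x) := hΩ.2.2.1.closure.subset hFsub
  have hxy : x ≠ y := Ne.symm hyx
  obtain ⟨hbb, hba⟩ := segParam_bdd hFbdd hxy
  set S := {t : ℝ | x + t • (y - x) ∈ openFace (closure Ω) x} with hSdef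
  rcases hy with h | ⟨a, ha, b, hb, hxab, hyab⟩
  · exact absurd h hyx
  obtain ⟨p, q, hp, hq, hpq, hxe⟩ := hxab
  obtain ⟨p', q', hp', hq', hpq', hye⟩ := hyab
  obtain rfl : p = 1 - q := by linarith
  obtain rfl : p' = 1 - q' := by linarith
  have hq1 : q < 1 := by linarith
  have hq1' : q' < 1 := by linarith
  have hqq : q' ≠ q := by
    intro h
    apply hyx
    rw [← hye, ← hxe, h]
  have hmem : ∀ t : ℝ, 0 < q + t*(q'-q) → q + t*(q'-q) < 1 → t ∈ S := by
    intro t h1 h2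
    have hzeq : (1 - (q + t*(q'-q))) • a + (q + t*(q'-q)) • b = x + t • (y - x) := by
      rw [← hxe, ← hye]; match_scalars <;> ring
    exact Or.inr ⟨a, ha, b, hb, ⟨1-q, q, by linarith, hq, by ring, hxe⟩,
      ⟨1-(q+t*(q'-q)), q+t*(q'-q), by linarith, h1, by ring, hzeq⟩⟩
  obtain ⟨tmin, tmax, h1, h2, hIoo⟩ :
      ∃ tmin tmax : ℝ, tmin < 0 ∧ 1 < tmax ∧ Set.Ioo tmin tmax ⊆ S := by
    rcases lt_or_gt_of_ne hqq with hlt | hgt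
    · refine ⟨(1-q)/(q'-q), q/(q-q'),
        div_neg_of_pos_of_neg (by linarith) (by linarith), ?_, ?_⟩
      · rw [lt_div_iff₀ (by linarith : (0:ℝ) < q - q')]; linarith
      · rintro t ⟨ha1, ha2⟩
        have hb2 : t * (q - q') < q := (lt_div_iff₀ (by linarith : (0:ℝ) < q - q')).mp ha2
        have hb1 : t * (q' - q) < 1 - q := (div_lt_iff_of_neg (by linarith : q' - q < 0)).mp ha1
        exact hmem t (by nlinarith) (by nlinarith)
    · refine ⟨-q/(q'-q), (1-q)/(q'-q),
        div_neg_of_neg_of_pos (by linarith) (by linarith), ?_, ?_⟩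
      · rw [lt_div_iff₀ (by linarith : (0:ℝ) < q' - q)]; linarith
      · rintro t ⟨ha1, ha2⟩
        have hb1 : -q < t * (q' - q) := (div_lt_iff₀ (by linarith : (0:ℝ) < q' - q)).mp ha1
        have hb2 : t * (q' - q) < 1 - q := (lt_div_iff₀ (by linarith : (0:ℝ) < q' - q)).mp ha2
        exact hmem t (by nlinarith) (by nlinarith)
  have htt : tmin < tmax := by linarith
  have hinf_le : sInf S ≤ tmin := by
    have h3 := csInf_le_csInf hbb (Set.nonempty_Ioo.mpr htt) hIoo
    rwa [csInf_Ioo htt] at h3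
  have hsup_ge : tmax ≤ sSup S := by
    have h3 := csSup_le_csSup hba (Set.nonempty_Ioo.mpr htt) hIoo
    rwa [csSup_Ioo htt] at h3
  have hSne : S.Nonempty := ⟨0, hIoo ⟨h1, by linarith⟩⟩
  have hc : Continuous fun t : ℝ => x + t • (y - x) := by continuity
  have hmapsto : Set.MapsTo (fun t : ℝ => x + t • (y - x)) S (closure Ω) :=
    fun t ht => hFsub ht
  have hinfmem : x + (sInf S) • (y - x) ∈ closure Ω := by
    have h3 := map_mem_closure hc (csInf_mem_closure hSne hbb) hmapsto
    rwa [closure_closure] at h3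
  have hsupmem : x + (sSup S) • (y - x) ∈ closure Ω := by
    have h3 := map_mem_closure hc (csSup_mem_closure hSne hba) hmapsto
    rwa [closure_closure] at h3
  exact ⟨lt_of_le_of_lt hinf_le h1, lt_of_lt_of_le h2 hsup_ge, hinfmem, hsupmem⟩
end Aux3
section Aux4
variable {E : Type*} [NormedAddCommGroup E] [NormedSpace ℝ E]

private lemma seg_subset_of_faces {Ω : Set E} (hΩ : IsProperlyConvex Ω) {xp xm yp ym : E}
    (hxp : xp ∈ closure Ω) (hxm : xm ∈ closure Ω)
    (hseg : openSegment ℝ xp xm ⊆ Ω)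
    (hyp : yp ∈ openFace (closure Ω) xp) (hym : ym ∈ openFace (closure Ω) xm) :
    openSegment ℝ yp ym ⊆ Ω := by
  obtain ⟨hopen, hconv, hbdd, -⟩ := hΩ
  obtain ⟨cp, hcp, s, hs0, hs1, hyps⟩ :
      ∃ c ∈ closure Ω, ∃ s : ℝ, 0 ≤ s ∧ s < 1 ∧ yp = xp + s • (c - xp) := by
    rcases face_rep hyp with h | ⟨c, hc, s, h1, h2, h3⟩
    · exact ⟨xp, hxp, 0, le_refl 0, zero_lt_one, by simp [h]⟩
    · exact ⟨c, hc, s, le_of_lt h1, h2, h3⟩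
  obtain ⟨cm, hcm, t, ht0, ht1, hymt⟩ :
      ∃ c ∈ closure Ω, ∃ t : ℝ, 0 ≤ t ∧ t < 1 ∧ ym = xm + t • (c - xm) := by
    rcases face_rep hym with h | ⟨c, hc, t, h1, h2, h3⟩
    · exact ⟨xm, hxm, 0, le_refl 0, zero_lt_one, by simp [h]⟩
    · exact ⟨c, hc, t, le_of_lt h1, h2, h3⟩
  rintro z ⟨a, b, ha, hb, hab, hz⟩
  by_cases hq : a*s + b*t = 0
  · have hs' : s = 0 := by nlinarith [mul_nonneg ha.le hs0, mul_nonneg hb.le ht0]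
    have ht' : t = 0 := by nlinarith [mul_nonneg ha.le hs0, mul_nonneg hb.le ht0]
    rw [hs', zero_smul, add_zero] at hyps
    rw [ht', zero_smul, add_zero] at hymt
    rw [hyps, hymt] at hz
    exact hseg ⟨a, b, ha, hb, hab, hz⟩
  · have hq0 : 0 < a*s + b*t :=
      lt_of_le_of_ne (by positivity) (Ne.symm hq)
    have hw0 : 0 < a*(1-s) + b*(1-t) := by nlinarith
    have hwq : a*(1-s) + b*(1-t) + (a*s+b*t) = 1 := by linear_combination hab
    have hu1 : (a*(1-s)/(a*(1-s) + b*(1-t))) • xp + (b*(1-t)/(a*(1-s) + b*(1-t))) • xm ∈ Ω := by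
      apply hseg
      exact ⟨_, _, div_pos (by nlinarith) hw0, div_pos (by nlinarith) hw0,
        by rw [← add_div, div_self hw0.ne'], rfl⟩
    have hw2 : (a*s/(a*s+b*t)) • cp + (b*t/(a*s+b*t)) • cm ∈ closure Ω :=
      hconv.closure hcp hcm (div_nonneg (by positivity) hq0.le)
        (div_nonneg (by positivity) hq0.le)
        (by rw [← add_div, div_self hq0.ne'])
    have hzeq : z = (a*(1-s) + b*(1-t)) •
        ((a*(1-s)/(a*(1-s) + b*(1-t))) • xp + (b*(1-t)/(a*(1-s) + b*(1-t))) • xm) +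
        (a*s+b*t) • ((a*s/(a*s+b*t)) • cp + (b*t/(a*s+b*t)) • cm) := by
      rw [← hz, hyps, hymt]
      match_scalars <;> field_simp [hw0.ne', hq0.ne'] <;> ring_nf <;> try (left; ring)
    have hmem := hconv.combo_interior_closure_mem_interior
      (a := a*(1-s) + b*(1-t)) (b := a*s+b*t)
      (show _ ∈ interior Ω by rw [hopen.interior_eq]; exact hu1) hw2 hw0 hq0.le hwq
    rw [hopen.interior_eq] at hmem
    rw [hzeq]
    exact hmem
end Aux4
section Aux5
variable {E : Type*} [NormedAddCommGroup E] [NormedSpace ℝ E]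

set_option maxHeartbeats 2000000 in
private lemma core {Ω : Set E} (hΩ : IsProperlyConvex Ω) {xp xm yp ym u v : E}
    {bp Cp bm Cm lam nu : ℝ}
    (hbp : 1 < bp) (hbpCp : bp < Cp) (hbm : 1 < bm) (hbmCm : bm < Cm)
    (hPa : xp + ((-1) / (bp - 1)) • (yp - xp) ∈ closure Ω)
    (hPb : xp + (Cp / (Cp - bp)) • (yp - xp) ∈ closure Ω)
    (hMa : xm + ((-1) / (bm - 1)) • (ym - xm) ∈ closure Ω)
    (hMb : xm + (Cm / (Cm - bm)) • (ym - xm) ∈ closure Ω)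
    (hnu0 : 0 < nu) (hnu1 : nu < 1)
    (hlam : lam = bp * nu / (bm * (1 - nu) + bp * nu))
    (hu : u = (1 - lam) • yp + lam • ym) (hv : v = (1 - nu) • xp + nu • xm)
    (huΩ : u ∈ Ω) (hvΩ : v ∈ Ω) :
    hilbertDist Ω u v ≤ (1/2) * Real.log (max Cp Cm) := by
  have hclconv : Convex ℝ (closure Ω) := hΩ.2.1.closure
  have hbp0 : (0:ℝ) < bp := by linarith
  have hbm0 : (0:ℝ) < bm := by linarith
  have hnu1' : (0:ℝ) < 1 - nu := by linarith
  set K := max Cp Cm with hK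
  have hCpK : Cp ≤ K := le_max_left _ _
  have hCmK : Cm ≤ K := le_max_right _ _
  have hKbp : bp < K := lt_of_lt_of_le hbpCp hCpK
  have hKbm : bm < K := lt_of_lt_of_le hbmCm hCmK
  have hK1 : (1:ℝ) < K := lt_trans hbp hKbp
  have hEe0 : (0:ℝ) < bm * (1 - nu) + bp * nu := by nlinarith
  have hG0 : (0:ℝ) < bp * bm - (bm * (1 - nu) + bp * nu) := by nlinarith
  have hH0 : (0:ℝ) < K * (bm * (1 - nu) + bp * nu) - bp * bm := by
    nlinarith [mul_pos (sub_pos.2 hKbp) (mul_pos hbm0 hnu1'),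
      mul_pos (sub_pos.2 hKbm) (mul_pos hbp0 hnu0)]
  set At := -(bp*bm) / (K * (bm * (1 - nu) + bp * nu) - bp * bm) with hAt
  set Bt := (bp*bm) / (bp * bm - (bm * (1 - nu) + bp * nu)) with hBt
  have hAt0 : At < 0 := div_neg_of_neg_of_pos (by nlinarith) hH0
  have hBt1 : 1 < Bt := by
    rw [hBt, lt_div_iff₀ hG0]; nlinarith
  -- B-side endpoint: beyond v
  have hEB : u + Bt • (v - u) ∈ closure Ω := by
    have hw1 : (0:ℝ) ≤ (1-nu)*bm*(bp-1)/(bp * bm - (bm * (1 - nu) + bp * nu)) :=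
      le_of_lt (div_pos (mul_pos (mul_pos hnu1' hbm0) (by linarith)) hG0)
    have hw2 : (0:ℝ) ≤ nu*bp*(bm-1)/(bp * bm - (bm * (1 - nu) + bp * nu)) :=
      le_of_lt (div_pos (mul_pos (mul_pos hnu0 hbp0) (by linarith)) hG0)
    have hsum : (1-nu)*bm*(bp-1)/(bp * bm - (bm * (1 - nu) + bp * nu))
        + nu*bp*(bm-1)/(bp * bm - (bm * (1 - nu) + bp * nu)) = 1 := by
      rw [← add_div, div_eq_one_iff_eq hG0.ne']
      ring
    have heq : u + Bt • (v - u) =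
        ((1-nu)*bm*(bp-1)/(bp * bm - (bm * (1 - nu) + bp * nu))) •
          (xp + ((-1) / (bp - 1)) • (yp - xp)) +
        (nu*bp*(bm-1)/(bp * bm - (bm * (1 - nu) + bp * nu))) •
          (xm + ((-1) / (bm - 1)) • (ym - xm)) := by
      rw [hu, hv, hlam, hBt]
      have h1 : bp - 1 ≠ 0 := by linarith
      have h2 : bm - 1 ≠ 0 := by linarith
      match_scalars <;> field_simp [h1, h2, hG0.ne', hEe0.ne'] <;> ring
    rw [heq]
    exact hclconv hPa hMa hw1 hw2 hsum
  -- interpolated far points on the two face lines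
  have hPsp : xp + (K/(K-bp)) • (yp - xp) ∈ closure Ω := by
    have hc10 : (0:ℝ) ≤ (bp-1)*(K-Cp)/((K-bp)*(Cp-1)) :=
      div_nonneg (mul_nonneg (by linarith) (by linarith))
        (le_of_lt (mul_pos (by linarith) (by linarith)))
    have hc20 : (0:ℝ) ≤ (K-1)*(Cp-bp)/((K-bp)*(Cp-1)) :=
      le_of_lt (div_pos (mul_pos (by linarith) (by linarith))
        (mul_pos (by linarith) (by linarith)))
    have h3 : K - bp ≠ 0 := by linarith
    have h4 : Cp - 1 ≠ 0 := by nlinarith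
    have hcs : (bp-1)*(K-Cp)/((K-bp)*(Cp-1)) + (K-1)*(Cp-bp)/((K-bp)*(Cp-1)) = 1 := by
      rw [← add_div, div_eq_one_iff_eq (mul_ne_zero h3 h4)]
      ring
    have heq : xp + (K/(K-bp)) • (yp - xp) =
        ((bp-1)*(K-Cp)/((K-bp)*(Cp-1))) • (xp + ((-1) / (bp - 1)) • (yp - xp)) +
        ((K-1)*(Cp-bp)/((K-bp)*(Cp-1))) • (xp + (Cp / (Cp - bp)) • (yp - xp)) := by
      have h1 : bp - 1 ≠ 0 := by linarith
      have h2 : Cp - bp ≠ 0 := by linarith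
      match_scalars <;> field_simp [h1, h2, h3, h4] <;> ring
    rw [heq]
    exact hclconv hPa hPb hc10 hc20 hcs
  have hMsm : xm + (K/(K-bm)) • (ym - xm) ∈ closure Ω := by
    have hc10 : (0:ℝ) ≤ (bm-1)*(K-Cm)/((K-bm)*(Cm-1)) :=
      div_nonneg (mul_nonneg (by linarith) (by linarith))
        (le_of_lt (mul_pos (by linarith) (by linarith)))
    have hc20 : (0:ℝ) ≤ (K-1)*(Cm-bm)/((K-bm)*(Cm-1)) :=
      le_of_lt (div_pos (mul_pos (by linarith) (by linarith))
        (mul_pos (by linarith) (by linarith)))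
    have h3 : K - bm ≠ 0 := by linarith
    have h4 : Cm - 1 ≠ 0 := by nlinarith
    have hcs : (bm-1)*(K-Cm)/((K-bm)*(Cm-1)) + (K-1)*(Cm-bm)/((K-bm)*(Cm-1)) = 1 := by
      rw [← add_div, div_eq_one_iff_eq (mul_ne_zero h3 h4)]
      ring
    have heq : xm + (K/(K-bm)) • (ym - xm) =
        ((bm-1)*(K-Cm)/((K-bm)*(Cm-1))) • (xm + ((-1) / (bm - 1)) • (ym - xm)) +
        ((K-1)*(Cm-bm)/((K-bm)*(Cm-1))) • (xm + (Cm / (Cm - bm)) • (ym - xm)) := by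
      have h1 : bm - 1 ≠ 0 := by linarith
      have h2 : Cm - bm ≠ 0 := by linarith
      match_scalars <;> field_simp [h1, h2, h3, h4] <;> ring
    rw [heq]
    exact hclconv hMa hMb hc10 hc20 hcs
  -- A-side endpoint: beyond u
  have hEA : u + At • (v - u) ∈ closure Ω := by
    have hw1 : (0:ℝ) ≤ (1-nu)*bm*(K-bp)/(K * (bm * (1 - nu) + bp * nu) - bp * bm) :=
      le_of_lt (div_pos (mul_pos (mul_pos hnu1' hbm0) (by linarith)) hH0)
    have hw2 : (0:ℝ) ≤ nu*bp*(K-bm)/(K * (bm * (1 - nu) + bp * nu) - bp * bm) :=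
      le_of_lt (div_pos (mul_pos (mul_pos hnu0 hbp0) (by linarith)) hH0)
    have hsum : (1-nu)*bm*(K-bp)/(K * (bm * (1 - nu) + bp * nu) - bp * bm)
        + nu*bp*(K-bm)/(K * (bm * (1 - nu) + bp * nu) - bp * bm) = 1 := by
      rw [← add_div, div_eq_one_iff_eq hH0.ne']
      ring
    have heq : u + At • (v - u) =
        ((1-nu)*bm*(K-bp)/(K * (bm * (1 - nu) + bp * nu) - bp * bm)) •
          (xp + (K/(K-bp)) • (yp - xp)) +
        (nu*bp*(K-bm)/(K * (bm * (1 - nu) + bp * nu) - bp * bm)) •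
          (xm + (K/(K-bm)) • (ym - xm)) := by
      rw [hu, hv, hlam, hAt]
      have h3 : K - bp ≠ 0 := by linarith
      have h4 : K - bm ≠ 0 := by linarith
      have h5 : (bm * (1 - nu) + bp * nu) * K - bp * bm ≠ 0 := by
        intro h; apply hH0.ne'; linear_combination h
      match_scalars <;> field_simp [h3, h4, hH0.ne', hEe0.ne', h5] <;> ring
    rw [heq]
    exact hclconv hPsp hMsm hw1 hw2 hsum
  have hb := chord_bound hΩ huΩ hvΩ hAt0 hBt1 hEA hEB
  have hratio : ((1 - At) * Bt) / ((-At) * (Bt - 1)) = K := by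
    rw [hAt, hBt]
    rw [div_eq_iff (by nlinarith [mul_pos (mul_pos hbp0 hbm0) hEe0] :
      (-(-(bp*bm) / (K * (bm * (1 - nu) + bp * nu) - bp * bm)) *
        ((bp*bm) / (bp * bm - (bm * (1 - nu) + bp * nu)) - 1)) ≠ 0)]
    field_simp
    ring
  rw [hratio] at hb
  exact hb
end Aux5
section Aux6
variable {E : Type*} [NormedAddCommGroup E] [NormedSpace ℝ E]

private lemma bridge {Ω : Set E} (hΩ : IsProperlyConvex Ω) {xp xm yp ym : E}
    (hxseg : openSegment ℝ xp xm ⊆ Ω) (hyseg : openSegment ℝ yp ym ⊆ Ω)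
    {bp Cp bm Cm RHS : ℝ} (hbp : 1 < bp) (hbpCp : bp < Cp) (hbm : 1 < bm) (hbmCm : bm < Cm)
    (hPa : xp + ((-1) / (bp - 1)) • (yp - xp) ∈ closure Ω)
    (hPb : xp + (Cp / (Cp - bp)) • (yp - xp) ∈ closure Ω)
    (hMa : xm + ((-1) / (bm - 1)) • (ym - xm) ∈ closure Ω)
    (hMb : xm + (Cm / (Cm - bm)) • (ym - xm) ∈ closure Ω)
    (hp : (1/2) * Real.log Cp ≤ RHS) (hm : (1/2) * Real.log Cm ≤ RHS) :
    (∀ u ∈ openSegment ℝ yp ym, ∃ v ∈ openSegment ℝ xp xm, hilbertDist Ω u v ≤ RHS) ∧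
    (∀ v ∈ openSegment ℝ xp xm, ∃ u ∈ openSegment ℝ yp ym, hilbertDist Ω u v ≤ RHS) := by
  have hbp0 : (0:ℝ) < bp := by linarith
  have hbm0 : (0:ℝ) < bm := by linarith
  have hmax : (1/2) * Real.log (max Cp Cm) ≤ RHS := by
    rcases max_cases Cp Cm with ⟨h1, -⟩ | ⟨h1, -⟩ <;> rw [h1] <;> assumption
  constructor
  · rintro u ⟨a, lam, ha, hlam0, hab, hu⟩
    have hlam1 : lam < 1 := by linarith
    have hD : 0 < lam * bm + (1 - lam) * bp := by
      have := mul_pos hlam0 hbm0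
      have := mul_pos (show (0:ℝ) < 1 - lam by linarith) hbp0
      linarith
    set nu := lam * bm / (lam * bm + (1 - lam) * bp) with hnu
    have hnu0 : 0 < nu := div_pos (mul_pos hlam0 hbm0) hD
    have hnu1 : nu < 1 := by
      rw [hnu, div_lt_one hD]
      nlinarith [mul_pos (show (0:ℝ) < 1 - lam by linarith) hbp0]
    have hEe0 : (0:ℝ) < bm * (1 - nu) + bp * nu := by
      have := mul_pos hbm0 (show (0:ℝ) < 1 - nu by linarith)
      have := mul_pos hbp0 hnu0
      linarith
    have hlam_eq : lam = bp * nu / (bm * (1 - nu) + bp * nu) := by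
      rw [eq_div_iff hEe0.ne', hnu]
      field_simp [hD.ne']
      ring
    have hu' : u = (1 - lam) • yp + lam • ym := by
      rw [← hu, show (1:ℝ) - lam = a by linarith]
    have hvmem : (1 - nu) • xp + nu • xm ∈ openSegment ℝ xp xm :=
      ⟨1 - nu, nu, by linarith, hnu0, by ring, rfl⟩
    refine ⟨(1 - nu) • xp + nu • xm, hvmem, ?_⟩
    have hb := core hΩ hbp hbpCp hbm hbmCm hPa hPb hMa hMb hnu0 hnu1 hlam_eq hu' rfl
      (hyseg ⟨a, lam, ha, hlam0, hab, hu⟩) (hxseg hvmem)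
    exact le_trans hb hmax
  · rintro v ⟨a, nu, ha, hnu0, hab, hv⟩
    have hnu1 : nu < 1 := by linarith
    have hEe0 : (0:ℝ) < bm * (1 - nu) + bp * nu := by
      have := mul_pos hbm0 (show (0:ℝ) < 1 - nu by linarith)
      have := mul_pos hbp0 hnu0
      linarith
    set lam := bp * nu / (bm * (1 - nu) + bp * nu) with hlam
    have hlam0 : 0 < lam := div_pos (mul_pos hbp0 hnu0) hEe0
    have hlam1 : lam < 1 := by
      rw [hlam, div_lt_one hEe0]
      nlinarith [mul_pos hbm0 (show (0:ℝ) < 1 - nu by linarith)]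
    have hv' : v = (1 - nu) • xp + nu • xm := by
      rw [← hv, show (1:ℝ) - nu = a by linarith]
    have humem : (1 - lam) • yp + lam • ym ∈ openSegment ℝ yp ym :=
      ⟨1 - lam, lam, by linarith, hlam0, by ring, rfl⟩
    refine ⟨(1 - lam) • yp + lam • ym, humem, ?_⟩
    have hb := core hΩ hbp hbpCp hbm hbmCm hPa hPb hMa hMb hnu0 hnu1 hlam rfl hv'
      (hyseg humem) (hxseg ⟨a, nu, ha, hnu0, hab, hv⟩)
    exact le_trans hb hmax
end Aux6
set_option maxHeartbeats 1000000 in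
theorem stmt11 {n : ℕ} (Ω : Set (EuclideanSpace ℝ (Fin n))) (hΩ : IsProperlyConvex Ω)
    (xp xm : EuclideanSpace ℝ (Fin n)) (hxp : xp ∈ closure Ω) (hxm : xm ∈ closure Ω)
    (hseg : openSegment ℝ xp xm ⊆ Ω)
    (yp ym : EuclideanSpace ℝ (Fin n))
    (hyp : yp ∈ openFace (closure Ω) xp) (hym : ym ∈ openFace (closure Ω) xm) :
    openSegment ℝ yp ym ⊆ Ω ∧
    (∀ u ∈ openSegment ℝ yp ym,
      sInf {r : ℝ | ∃ v ∈ openSegment ℝ xp xm, r = hilbertDist Ω u v} ≤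
        max (hilbertDist (openFace (closure Ω) xp) xp yp)
            (hilbertDist (openFace (closure Ω) xm) xm ym)) ∧
    (∀ v ∈ openSegment ℝ xp xm,
      sInf {r : ℝ | ∃ u ∈ openSegment ℝ yp ym, r = hilbertDist Ω u v} ≤
        max (hilbertDist (openFace (closure Ω) xp) xp yp)
            (hilbertDist (openFace (closure Ω) xm) xm ym)) := by
  have hyseg : openSegment ℝ yp ym ⊆ Ω := seg_subset_of_faces hΩ hxp hxm hseg hyp hym
  set dp := hilbertDist (openFace (closure Ω) xp) xp yp with hdp
  set dm := hilbertDist (openFace (closure Ω) xm) xm ym with hdm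
  -- the key existence statements
  have hEx : (∀ u ∈ openSegment ℝ yp ym, ∃ v ∈ openSegment ℝ xp xm,
        hilbertDist Ω u v ≤ max dp dm) ∧
      (∀ v ∈ openSegment ℝ xp xm, ∃ u ∈ openSegment ℝ yp ym,
        hilbertDist Ω u v ≤ max dp dm) := by
    by_cases hp : yp = xp
    · by_cases hm : ym = xm
      · have hRHS : max dp dm = 0 := by
          rw [hdp, hdm, hilbertDist, if_pos hp.symm, hilbertDist, if_pos hm.symm]
          simp
        constructor
        · intro u hu
          refine ⟨u, by rwa [hp, hm] at hu, ?_⟩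
          rw [hilbertDist, if_pos rfl, hRHS]
        · intro v hv
          refine ⟨v, by rwa [← hp, ← hm] at hv, ?_⟩
          rw [hilbertDist, if_pos rfl, hRHS]
      · -- p degenerate, m not
        obtain ⟨ham, hbm, hMa0, hMb0⟩ := face_chord hΩ hxm hym hm
        set am := sInf {t : ℝ | xm + t • (ym - xm) ∈ openFace (closure Ω) xm} with ham_def
        set bmm := sSup {t : ℝ | xm + t • (ym - xm) ∈ openFace (closure Ω) xm} with hbm_def
        set Bm := (1 - am) / (-am) with hBm
        set Cm := ((1 - am) * bmm) / ((-am) * (bmm - 1)) with hCm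
        have ham0 : (0:ℝ) < -am := by linarith
        have hbm1 : (0:ℝ) < bmm - 1 := by linarith
        have hBm1 : 1 < Bm := by rw [hBm, lt_div_iff₀ ham0]; linarith
        have hCmBm : Bm < Cm := by
          rw [hBm, hCm, div_lt_div_iff₀ ham0 (mul_pos ham0 hbm1)]
          nlinarith
        have hdm_eq : dm = (1/2) * Real.log Cm := by
          rw [hdm, hilbertDist, if_neg (fun h => hm h.symm)]
        have hconv1Bm : (-1) / (Bm - 1) = am := by
          rw [hBm]
          have h2 : (1 - am) / -am - 1 = 1 / (-am) := by rw [div_sub_one ham0.ne']; ring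
          rw [h2]
          field_simp
        have hconv2Bm : Cm / (Cm - Bm) = bmm := by
          rw [hCm, hBm]
          have hD : -am * (bmm - 1) ≠ 0 := mul_ne_zero ham0.ne' (by linarith)
          have h3 : (1 - am) * bmm / (-am * (bmm - 1)) - (1 - am) / -am
              = (1 - am) / (-am * (bmm - 1)) := by
            rw [div_sub_div _ _ hD ham0.ne', div_eq_div_iff (mul_ne_zero hD ham0.ne') hD]
            ring
          have h4 : (1 - am) / (-am * (bmm - 1)) ≠ 0 := div_ne_zero (by linarith) hD
          rw [h3, show (1 - am) * bmm / (-am * (bmm - 1)) = bmm * ((1 - am) / (-am * (bmm - 1))) by ring,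
            mul_div_cancel_right₀ _ h4]
        have hMa : xm + ((-1) / (Bm - 1)) • (ym - xm) ∈ closure Ω := by rw [hconv1Bm]; exact hMa0
        have hMb : xm + (Cm / (Cm - Bm)) • (ym - xm) ∈ closure Ω := by rw [hconv2Bm]; exact hMb0
        have hPa : xp + ((-1) / (Bm - 1)) • (yp - xp) ∈ closure Ω := by
          rw [hp]; simpa using hxp
        have hPb : xp + (Cm / (Cm - Bm)) • (yp - xp) ∈ closure Ω := by
          rw [hp]; simpa using hxp
        have hbnd : (1/2) * Real.log Cm ≤ max dp dm := by
          rw [← hdm_eq]; exact le_max_right _ _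
        exact bridge hΩ hseg hyseg hBm1 hCmBm hBm1 hCmBm hPa hPb hMa hMb hbnd hbnd
    · obtain ⟨hap, hbp, hPa0, hPb0⟩ := face_chord hΩ hxp hyp hp
      set ap := sInf {t : ℝ | xp + t • (yp - xp) ∈ openFace (closure Ω) xp} with hap_def
      set bpp := sSup {t : ℝ | xp + t • (yp - xp) ∈ openFace (closure Ω) xp} with hbp_def
      set Bp := (1 - ap) / (-ap) with hBp
      set Cp := ((1 - ap) * bpp) / ((-ap) * (bpp - 1)) with hCp
      have hap0 : (0:ℝ) < -ap := by linarith
      have hbp1 : (0:ℝ) < bpp - 1 := by linarith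
      have hBp1 : 1 < Bp := by rw [hBp, lt_div_iff₀ hap0]; linarith
      have hCpBp : Bp < Cp := by
        rw [hBp, hCp, div_lt_div_iff₀ hap0 (mul_pos hap0 hbp1)]
        nlinarith
      have hdp_eq : dp = (1/2) * Real.log Cp := by
        rw [hdp, hilbertDist, if_neg (fun h => hp h.symm)]
      have hconv1Bp : (-1) / (Bp - 1) = ap := by
        rw [hBp]
        have h2 : (1 - ap) / -ap - 1 = 1 / (-ap) := by rw [div_sub_one hap0.ne']; ring
        rw [h2]
        field_simp
      have hconv2Bp : Cp / (Cp - Bp) = bpp := by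
        rw [hCp, hBp]
        have hD : -ap * (bpp - 1) ≠ 0 := mul_ne_zero hap0.ne' (by linarith)
        have h3 : (1 - ap) * bpp / (-ap * (bpp - 1)) - (1 - ap) / -ap
            = (1 - ap) / (-ap * (bpp - 1)) := by
          rw [div_sub_div _ _ hD hap0.ne', div_eq_div_iff (mul_ne_zero hD hap0.ne') hD]
          ring
        have h4 : (1 - ap) / (-ap * (bpp - 1)) ≠ 0 := div_ne_zero (by linarith) hD
        rw [h3, show (1 - ap) * bpp / (-ap * (bpp - 1)) = bpp * ((1 - ap) / (-ap * (bpp - 1))) by ring,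
          mul_div_cancel_right₀ _ h4]
      have hPa : xp + ((-1) / (Bp - 1)) • (yp - xp) ∈ closure Ω := by rw [hconv1Bp]; exact hPa0
      have hPb : xp + (Cp / (Cp - Bp)) • (yp - xp) ∈ closure Ω := by rw [hconv2Bp]; exact hPb0
      have hbndp : (1/2) * Real.log Cp ≤ max dp dm := by
        rw [← hdp_eq]; exact le_max_left _ _
      by_cases hm : ym = xm
      · have hMa : xm + ((-1) / (Bp - 1)) • (ym - xm) ∈ closure Ω := by
          rw [hm]; simpa using hxm
        have hMb : xm + (Cp / (Cp - Bp)) • (ym - xm) ∈ closure Ω := by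
          rw [hm]; simpa using hxm
        exact bridge hΩ hseg hyseg hBp1 hCpBp hBp1 hCpBp hPa hPb hMa hMb hbndp hbndp
      · obtain ⟨ham, hbm, hMa0, hMb0⟩ := face_chord hΩ hxm hym hm
        set am := sInf {t : ℝ | xm + t • (ym - xm) ∈ openFace (closure Ω) xm} with ham_def
        set bmm := sSup {t : ℝ | xm + t • (ym - xm) ∈ openFace (closure Ω) xm} with hbm_def
        set Bm := (1 - am) / (-am) with hBm
        set Cm := ((1 - am) * bmm) / ((-am) * (bmm - 1)) with hCm
        have ham0 : (0:ℝ) < -am := by linarith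
        have hbm1 : (0:ℝ) < bmm - 1 := by linarith
        have hBm1 : 1 < Bm := by rw [hBm, lt_div_iff₀ ham0]; linarith
        have hCmBm : Bm < Cm := by
          rw [hBm, hCm, div_lt_div_iff₀ ham0 (mul_pos ham0 hbm1)]
          nlinarith
        have hdm_eq : dm = (1/2) * Real.log Cm := by
          rw [hdm, hilbertDist, if_neg (fun h => hm h.symm)]
        have hconv1Bm : (-1) / (Bm - 1) = am := by
          rw [hBm]
          have h2 : (1 - am) / -am - 1 = 1 / (-am) := by rw [div_sub_one ham0.ne']; ring
          rw [h2]
          field_simp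
        have hconv2Bm : Cm / (Cm - Bm) = bmm := by
          rw [hCm, hBm]
          have hD : -am * (bmm - 1) ≠ 0 := mul_ne_zero ham0.ne' (by linarith)
          have h3 : (1 - am) * bmm / (-am * (bmm - 1)) - (1 - am) / -am
              = (1 - am) / (-am * (bmm - 1)) := by
            rw [div_sub_div _ _ hD ham0.ne', div_eq_div_iff (mul_ne_zero hD ham0.ne') hD]
            ring
          have h4 : (1 - am) / (-am * (bmm - 1)) ≠ 0 := div_ne_zero (by linarith) hD
          rw [h3, show (1 - am) * bmm / (-am * (bmm - 1)) = bmm * ((1 - am) / (-am * (bmm - 1))) by ring,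
            mul_div_cancel_right₀ _ h4]
        have hMa : xm + ((-1) / (Bm - 1)) • (ym - xm) ∈ closure Ω := by rw [hconv1Bm]; exact hMa0
        have hMb : xm + (Cm / (Cm - Bm)) • (ym - xm) ∈ closure Ω := by rw [hconv2Bm]; exact hMb0
        have hbndm : (1/2) * Real.log Cm ≤ max dp dm := by
          rw [← hdm_eq]; exact le_max_right _ _
        exact bridge hΩ hseg hyseg hBp1 hCpBp hBm1 hCmBm hPa hPb hMa hMb hbndp hbndm
  refine ⟨hyseg, ?_, ?_⟩
  · intro u hu
    obtain ⟨v, hv, hle⟩ := hEx.1 u hu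
    have hbdd : BddBelow {r : ℝ | ∃ v ∈ openSegment ℝ xp xm, r = hilbertDist Ω u v} := by
      refine ⟨0, ?_⟩
      rintro r ⟨v', hv', rfl⟩
      exact hilbertDist_nonneg_s11 hΩ (hyseg hu) (hseg hv')
    exact csInf_le_of_le hbdd ⟨v, hv, rfl⟩ hle
  · intro v hv
    obtain ⟨u, hu, hle⟩ := hEx.2 v hv
    have hbdd : BddBelow {r : ℝ | ∃ u ∈ openSegment ℝ yp ym, r = hilbertDist Ω u v} := by
      refine ⟨0, ?_⟩
      rintro r ⟨u', hu', rfl⟩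
      exact hilbertDist_nonneg_s11 hΩ (hyseg hu') (hseg hv)
    exact csInf_le_of_le hbdd ⟨u, hu, rfl⟩ hle
end

section
/- Let (X,d) be a proper geodesic metric space, M a Morse gauge, α : [0,∞) → X an M-Morse geodesic ray, and β : [0,∞) → X a geodesic ray with β(0) = α(0) whose image has finite Hausdorff distance from the image of α. Then there exists δ_M depending only on M (and X) such that d(α(t), β(t)) ≤ δ_M for all t ≥ 0. -/
open Set Metric

/-- A unit-speed geodesic ray `α : [0,∞) → X`. -/
def IsGeodRay {X : Type*} [MetricSpace X] (α : ℝ → X) : Prop :=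
  ∀ s ∈ Set.Ici (0 : ℝ), ∀ t ∈ Set.Ici (0 : ℝ), dist (α s) (α t) = |s - t|

/-- `α` is `M`-Morse: every `(λ,a)`-quasi-geodesic with endpoints on `α` stays within
`M λ a` of (the image of) `α`. -/
def IsMorseRay {X : Type*} [MetricSpace X] (M : ℝ → ℝ → ℝ) (α : ℝ → X) : Prop :=
  ∀ lam a : ℝ, 1 ≤ lam → 0 ≤ a → ∀ (q : ℝ → X) (s t : ℝ), s ≤ t →
    (∀ u ∈ Set.Icc s t, ∀ v ∈ Set.Icc s t,
      (1 / lam) * |u - v| - a ≤ dist (q u) (q v) ∧ dist (q u) (q v) ≤ lam * |u - v| + a) →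
    q s ∈ α '' Set.Ici 0 → q t ∈ α '' Set.Ici 0 →
    ∀ u ∈ Set.Icc s t, ∃ p ∈ α '' Set.Ici 0, dist (q u) p ≤ M lam a

/-- Cordes's key lemma: in a proper geodesic metric space, for every Morse gauge
`M` there is `δ_M` such that any geodesic ray `β` starting at the same point as an `M`-Morse
geodesic ray `α` and at finite Hausdorff distance from it satisfies
`dist (α t) (β t) ≤ δ_M` for all `t ≥ 0`. -/
theorem stmt17 {X : Type*} [MetricSpace X] [ProperSpace X]
    (hgeo : ∀ a b : X, ∃ s : Set X, IsGeodSeg s a b) (M : ℝ → ℝ → ℝ) :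
    ∃ δM : ℝ, ∀ α β : ℝ → X, IsGeodRay α → IsGeodRay β → β 0 = α 0 → IsMorseRay M α →
      (∃ C : ℝ, (∀ t ∈ Set.Ici (0 : ℝ), ∃ s ∈ Set.Ici (0 : ℝ), dist (α t) (β s) ≤ C) ∧
        (∀ s ∈ Set.Ici (0 : ℝ), ∃ t ∈ Set.Ici (0 : ℝ), dist (β s) (α t) ≤ C)) →
      ∀ t ∈ Set.Ici (0 : ℝ), dist (α t) (β t) ≤ δM := by
  classical
  refine ⟨2 * M 1 (M 3 6 + 3), ?_⟩
  rintro α β hα hβ hβ0 hMo ⟨C, hCα, hCβ⟩ t ht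
  rw [mem_Ici] at ht
  have hα0A : α 0 ∈ α '' Ici (0:ℝ) := ⟨0, mem_Ici.2 le_rfl, rfl⟩
  have hAne : (α '' Ici (0:ℝ)).Nonempty := ⟨_, hα0A⟩
  -- the gauge value M 3 6 is nonnegative
  have hM36 : 0 ≤ M 3 6 := by
    obtain ⟨p, -, hp⟩ :=
      hMo 3 6 (by norm_num) (by norm_num) (fun _ => α 0) 0 0 le_rfl
        (by
          rintro u ⟨hu1, hu2⟩ v ⟨hv1, hv2⟩
          have hu : u = 0 := le_antisymm hu2 hu1
          have hv : v = 0 := le_antisymm hv2 hv1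
          subst hu; subst hv
          simp) hα0A hα0A 0 ⟨le_rfl, le_rfl⟩
    exact dist_nonneg.trans hp
  set f : ℝ → ℝ := fun s => infDist (β s) (α '' Ici (0:ℝ)) with hfdef
  have hf0 : ∀ s, 0 ≤ f s := fun s => infDist_nonneg
  have hfC : ∀ s, 0 ≤ s → f s ≤ C := by
    intro s hs
    obtain ⟨r, hr, hd⟩ := hCβ s hs
    have hmem : α r ∈ α '' Ici (0:ℝ) := ⟨r, hr, rfl⟩
    exact (infDist_le_dist_of_mem hmem).trans hd
  have hfle : ∀ s : ℝ, ∀ p ∈ α '' Ici (0:ℝ), f s ≤ dist (β s) p :=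
    fun s p hp => infDist_le_dist_of_mem hp
  set g : ℝ → ℝ := fun T => sInf (f '' Ici T) with hgdef
  have hgne : ∀ T : ℝ, (f '' Ici T).Nonempty := fun T => ⟨f T, T, mem_Ici.2 le_rfl, rfl⟩
  have hgbdd : ∀ T : ℝ, BddBelow (f '' Ici T) := by
    intro T; exact ⟨0, by rintro x ⟨s, -, rfl⟩; exact hf0 s⟩
  have hrange_bdd : BddAbove (Set.range g) := by
    refine ⟨C, ?_⟩
    rintro x ⟨T, rfl⟩
    exact (csInf_le (hgbdd T) ⟨max T 0, mem_Ici.2 (le_max_left _ _), rfl⟩).trans (hfC _ (le_max_right _ _))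
  set m : ℝ := sSup (Set.range g) with hmdef
  have hm0 : 0 ≤ m := by
    have h1 : g 0 ≤ m := le_csSup hrange_bdd ⟨0, rfl⟩
    have h2 : 0 ≤ g 0 := by
      show (0:ℝ) ≤ sInf (f '' Ici 0)
      exact le_csInf (hgne 0) (by rintro x ⟨s, -, rfl⟩; exact hf0 s)
    linarith
  have hsmall : ∀ T : ℝ, ∃ s, T ≤ s ∧ 0 ≤ s ∧ f s < m + 1 := by
    intro T
    have h1 : g (max T 0) ≤ m := le_csSup hrange_bdd ⟨_, rfl⟩
    have h2 : sInf (f '' Ici (max T 0)) < m + 1 := lt_of_le_of_lt h1 (by linarith)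
    obtain ⟨x, ⟨s, hs, rfl⟩, hx⟩ := (csInf_lt_iff (hgbdd _) (hgne _)).1 h2
    exact ⟨s, (le_max_left T 0).trans hs, (le_max_right T 0).trans hs, hx⟩
  obtain ⟨T0, hT00, hT0⟩ : ∃ T, 0 ≤ T ∧ ∀ u, T ≤ u → m - 1 < f u := by
    have hne : (Set.range g).Nonempty := ⟨g 0, ⟨0, rfl⟩⟩
    obtain ⟨x, hxmem, hT⟩ :=
      exists_lt_of_lt_csSup hne (show m - 1 < sSup (Set.range g) from by rw [← hmdef]; linarith)
    obtain ⟨T, rfl⟩ := hxmem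
    refine ⟨max T 0, le_max_right T 0, ?_⟩
    intro u hu
    have h2 : g T ≤ f u := csInf_le (hgbdd T) ⟨u, (le_max_left T 0).trans hu, rfl⟩
    linarith
  -- Step I : m ≤ M 3 6 + 1
  have hmle : m ≤ M 3 6 + 1 := by
    obtain ⟨t1, ht1T, ht10, ht1f⟩ := hsmall T0
    obtain ⟨t2, ht2T, ht20, ht2f⟩ := hsmall (t1 + 4 * (m + 1))
    obtain ⟨p1, hp1A, hp1d⟩ := (infDist_lt_iff hAne).1 ht1f
    obtain ⟨p2, hp2A, hp2d⟩ := (infDist_lt_iff hAne).1 ht2f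
    obtain ⟨s1, G1, hG10, hG1e, hG1iso, -⟩ := hgeo p1 (β t1)
    obtain ⟨s2, G2, hG20, hG2e, hG2iso, -⟩ := hgeo (β t2) p2
    set d1 : ℝ := dist p1 (β t1) with hd1def
    set d2 : ℝ := dist (β t2) p2 with hd2def
    set B : ℝ := t2 - t1 with hBdef
    have hd1m : d1 < m + 1 := by rw [hd1def, dist_comm]; exact hp1d
    have hd2m : d2 < m + 1 := hp2d
    have hd10 : 0 ≤ d1 := dist_nonneg
    have hd20 : 0 ≤ d2 := dist_nonneg
    have hB : 4 * (m + 1) ≤ B := by rw [hBdef]; linarith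
    have hBpos : 0 < B := by linarith
    set q : ℝ → X := fun u => if u ≤ 0 then G1 (u + d1) else
      if u ≤ B then β (t1 + u) else G2 (u - B) with hqdef
    have hq1 : ∀ u : ℝ, u ≤ 0 → q u = G1 (u + d1) := by
      intro u h; simp only [hqdef]; rw [if_pos h]
    have hq2 : ∀ u : ℝ, 0 < u → u ≤ B → q u = β (t1 + u) := by
      intro u h0 hB'; simp only [hqdef]; rw [if_neg (not_le.2 h0), if_pos hB']
    have hq3 : ∀ u : ℝ, B < u → q u = G2 (u - B) := by
      intro u h; simp only [hqdef]
      rw [if_neg (not_le.2 (lt_trans hBpos h)), if_neg (not_le.2 h)]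
    -- distances on the first segment
    have hG1d : ∀ u : ℝ, -d1 ≤ u → u ≤ 0 →
        dist (G1 (u + d1)) (β t1) = -u ∧ dist (G1 (u + d1)) p1 = u + d1 := by
      intro u h1 h2
      have hmem : u + d1 ∈ Icc (0:ℝ) (dist p1 (β t1)) := ⟨by linarith, by rw [← hd1def]; linarith⟩
      have hmem0 : (0:ℝ) ∈ Icc (0:ℝ) (dist p1 (β t1)) := ⟨le_rfl, dist_nonneg⟩
      have hmemd : dist p1 (β t1) ∈ Icc (0:ℝ) (dist p1 (β t1)) := ⟨dist_nonneg, le_rfl⟩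
      constructor
      · rw [← hG1e]
        rw [hG1iso _ hmem _ hmemd, ← hd1def]
        rw [abs_of_nonpos (by linarith)]; ring
      · rw [← hG10]
        rw [hG1iso _ hmem _ hmem0]
        rw [abs_of_nonneg (by linarith)]; ring
    have hG2d : ∀ v : ℝ, B ≤ v → v ≤ B + d2 →
        dist (G2 (v - B)) (β t2) = v - B ∧ dist (G2 (v - B)) p2 = B + d2 - v := by
      intro v h1 h2
      have hmem : v - B ∈ Icc (0:ℝ) (dist (β t2) p2) := ⟨by linarith, by rw [← hd2def]; linarith⟩
      have hmem0 : (0:ℝ) ∈ Icc (0:ℝ) (dist (β t2) p2) := ⟨le_rfl, dist_nonneg⟩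
      have hmemd : dist (β t2) p2 ∈ Icc (0:ℝ) (dist (β t2) p2) := ⟨dist_nonneg, le_rfl⟩
      constructor
      · rw [← hG20, hG2iso _ hmem _ hmem0, abs_of_nonneg (by linarith)]; ring
      · rw [← hG2e, hG2iso _ hmem _ hmemd, ← hd2def, abs_of_nonpos (by linarith)]; ring
    have hβray : ∀ u v : ℝ, 0 ≤ u → 0 ≤ v → dist (β u) (β v) = |u - v| := by
      intro u v hu hv; exact hβ u (mem_Ici.2 hu) v (mem_Ici.2 hv)
    have ht12 : t1 ≤ t2 := by
      have h := hB; rw [hBdef] at h; linarith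
    have hβ12 : dist (β t1) (β t2) = B := by
      rw [hβray t1 t2 ht10 ht20, abs_of_nonpos (by linarith)]
      rw [hBdef]; ring
    -- the main two-sided estimate, for u ≤ v
    have main : ∀ u v : ℝ, u ∈ Icc (-d1) (B + d2) → v ∈ Icc (-d1) (B + d2) → u ≤ v →
        (v - u) / 3 - 6 ≤ dist (q u) (q v) ∧ dist (q u) (q v) ≤ v - u := by
      rintro u v ⟨hu1, hu2⟩ ⟨hv1, hv2⟩ huv
      by_cases hu0 : u ≤ 0
      · by_cases hv0 : v ≤ 0
        · -- both on segment 1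
          rw [hq1 u hu0, hq1 v hv0]
          have hmu : u + d1 ∈ Icc (0:ℝ) (dist p1 (β t1)) := ⟨by linarith, by rw [← hd1def]; linarith⟩
          have hmv : v + d1 ∈ Icc (0:ℝ) (dist p1 (β t1)) := ⟨by linarith, by rw [← hd1def]; linarith⟩
          have : dist (G1 (u + d1)) (G1 (v + d1)) = v - u := by
            rw [hG1iso _ hmu _ hmv, abs_of_nonpos (by linarith)]; ring
          rw [this]; constructor <;> linarith
        · push_neg at hv0
          by_cases hvB : v ≤ B
          · -- u on segment 1, v on the ray part
            rw [hq1 u hu0, hq2 v hv0 hvB]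
            obtain ⟨e1, e2⟩ := hG1d u hu1 hu0
            have hbv : dist (β t1) (β (t1 + v)) = v := by
              rw [hβray _ _ ht10 (by linarith), abs_of_nonpos (by linarith)]; ring
            have hup : dist (G1 (u + d1)) (β (t1 + v)) ≤ -u + v := by
              calc dist (G1 (u + d1)) (β (t1 + v)) ≤
                  dist (G1 (u + d1)) (β t1) + dist (β t1) (β (t1 + v)) := dist_triangle _ _ _
                _ = -u + v := by rw [e1, hbv]
            have hlow1 : v + u ≤ dist (G1 (u + d1)) (β (t1 + v)) := by
              have := dist_triangle (β t1) (G1 (u + d1)) (β (t1 + v))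
              rw [dist_comm (β t1) (G1 (u + d1)), e1] at this
              linarith [hbv ▸ this]
            have hlow2 : f (t1 + v) - (u + d1) ≤ dist (G1 (u + d1)) (β (t1 + v)) := by
              have h1 : f (t1 + v) ≤ dist (β (t1 + v)) p1 := hfle _ _ hp1A
              have h2 := dist_triangle (β (t1 + v)) (G1 (u + d1)) p1
              rw [dist_comm (β (t1 + v)) (G1 (u + d1))] at h2
              rw [e2] at h2
              linarith
            have hfm : m - 1 < f (t1 + v) := hT0 _ (by linarith)
            constructor <;> linarith
          · -- u on segment 1, v on segment 2
            push_neg at hvB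
            rw [hq1 u hu0, hq3 v hvB]
            obtain ⟨e1, e2⟩ := hG1d u hu1 hu0
            obtain ⟨e3, e4⟩ := hG2d v hvB.le hv2
            have hup : dist (G1 (u + d1)) (G2 (v - B)) ≤ -u + B + (v - B) := by
              calc dist (G1 (u + d1)) (G2 (v - B)) ≤
                  dist (G1 (u + d1)) (β t1) + dist (β t1) (β t2) + dist (β t2) (G2 (v - B)) := by
                    exact dist_triangle4 _ _ _ _
                _ = -u + B + (v - B) := by rw [e1, hβ12, dist_comm (β t2) (G2 (v - B)), e3]
            have hlow : B + u - (v - B) ≤ dist (G1 (u + d1)) (G2 (v - B)) := by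
              have h2 := dist_triangle4 (β t1) (G1 (u + d1)) (G2 (v - B)) (β t2)
              rw [dist_comm (β t1) (G1 (u + d1)), e1, e3, hβ12] at h2
              linarith
            constructor <;> linarith
      · push_neg at hu0
        by_cases huB : u ≤ B
        · by_cases hvB : v ≤ B
          · -- both on the ray part
            rw [hq2 u hu0 huB, hq2 v (by linarith) hvB]
            have : dist (β (t1 + u)) (β (t1 + v)) = v - u := by
              rw [hβray _ _ (by linarith) (by linarith), abs_of_nonpos (by linarith)]; ring
            rw [this]; constructor <;> linarith
          · -- u on the ray part, v on segment 2
            push_neg at hvB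
            rw [hq2 u hu0 huB, hq3 v hvB]
            obtain ⟨e3, e4⟩ := hG2d v hvB.le hv2
            have hbu : dist (β (t1 + u)) (β t2) = B - u := by
              have h2 : t1 + u - t2 ≤ 0 := by
                have h := huB; rw [hBdef] at h; linarith
              rw [hβray _ _ (by linarith) ht20, abs_of_nonpos h2]
              rw [hBdef]; ring
            have hup : dist (β (t1 + u)) (G2 (v - B)) ≤ (B - u) + (v - B) := by
              calc dist (β (t1 + u)) (G2 (v - B)) ≤
                  dist (β (t1 + u)) (β t2) + dist (β t2) (G2 (v - B)) := dist_triangle _ _ _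
                _ = (B - u) + (v - B) := by rw [hbu, dist_comm (β t2) (G2 (v - B)), e3]
            have hlow1 : (B - u) - (v - B) ≤ dist (β (t1 + u)) (G2 (v - B)) := by
              have h2 := dist_triangle (β (t1 + u)) (G2 (v - B)) (β t2)
              rw [dist_comm (G2 (v - B)) (β t2), dist_comm (β t2) (G2 (v - B)), e3] at h2
              linarith [hbu ▸ h2]
            have hlow2 : f (t1 + u) - (B + d2 - v) ≤ dist (β (t1 + u)) (G2 (v - B)) := by
              have h1 : f (t1 + u) ≤ dist (β (t1 + u)) p2 := hfle _ _ hp2A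
              have h2 := dist_triangle (β (t1 + u)) (G2 (v - B)) p2
              rw [e4] at h2
              linarith
            have hfm : m - 1 < f (t1 + u) := hT0 _ (by linarith)
            constructor <;> linarith
        · -- both on segment 2
          push_neg at huB
          have hvB : B < v := lt_of_lt_of_le huB huv
          rw [hq3 u huB, hq3 v hvB]
          have hmu : u - B ∈ Icc (0:ℝ) (dist (β t2) p2) := ⟨by linarith, by rw [← hd2def]; linarith⟩
          have hmv : v - B ∈ Icc (0:ℝ) (dist (β t2) p2) := ⟨by linarith, by rw [← hd2def]; linarith⟩
          have : dist (G2 (u - B)) (G2 (v - B)) = v - u := by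
            rw [hG2iso _ hmu _ hmv, abs_of_nonpos (by linarith)]; ring
          rw [this]; constructor <;> linarith
    have hqg : ∀ u ∈ Icc (-d1) (B + d2), ∀ v ∈ Icc (-d1) (B + d2),
        (1 / 3) * |u - v| - 6 ≤ dist (q u) (q v) ∧ dist (q u) (q v) ≤ 3 * |u - v| + 6 := by
      intro u hu v hv
      rcases le_total u v with h | h
      · obtain ⟨h1, h2⟩ := main u v hu hv h
        have habs : |u - v| = v - u := by rw [abs_sub_comm, abs_of_nonneg (by linarith)]
        rw [habs]; constructor <;> linarith
      · obtain ⟨h1, h2⟩ := main v u hv hu h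
        have habs : |u - v| = u - v := abs_of_nonneg (by linarith)
        rw [habs, dist_comm]; constructor <;> linarith
    have hqsA : q (-d1) ∈ α '' Ici (0:ℝ) := by
      have : q (-d1) = G1 (-d1 + d1) := hq1 _ (by linarith)
      rw [this, neg_add_cancel, hG10]; exact hp1A
    have hqtA : q (B + d2) ∈ α '' Ici (0:ℝ) := by
      rcases eq_or_lt_of_le hd20 with h0 | h0
      · have he : q (B + d2) = β (t1 + (B + d2)) := hq2 _ (by linarith) (by linarith)
        have hb2 : β t2 = p2 := by
          apply eq_of_dist_eq_zero; rw [← hd2def, ← h0]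
        have ht2e : t1 + (B + d2) = t2 := by rw [hBdef, ← h0]; ring
        rw [he, ht2e, hb2]; exact hp2A
      · have he : q (B + d2) = G2 (B + d2 - B) := hq3 _ (by linarith)
        have h2 : B + d2 - B = d2 := by ring
        rw [he, h2, hd2def, hG2e]; exact hp2A
    obtain ⟨p, hpA, hpd⟩ :=
      hMo 3 6 (by norm_num) (by norm_num) q (-d1) (B + d2) (by linarith) hqg hqsA hqtA 0
        ⟨by linarith, by linarith⟩
    have hq0 : q 0 = β t1 := by
      rw [hq1 0 le_rfl, zero_add, hd1def, hG1e]
    have h1 : m - 1 < f t1 := hT0 t1 (by linarith)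
    have h2 : f t1 ≤ dist (β t1) p := hfle t1 p hpA
    rw [hq0] at hpd
    linarith
  -- Step II : every point of β is within M 1 (M 3 6 + 3) of α
  have hstep2 : ∀ u : ℝ, 0 ≤ u → ∃ p ∈ α '' Ici (0:ℝ), dist (β u) p ≤ M 1 (M 3 6 + 3) := by
    intro u hu
    obtain ⟨s, hsge, hs0, hsf⟩ := hsmall (u + 1)
    obtain ⟨p, hpA, hpd⟩ := (infDist_lt_iff hAne).1 hsf
    have hpd2 : dist (β s) p ≤ M 3 6 + 2 := by linarith
    have ha0 : (0:ℝ) ≤ M 3 6 + 3 := by linarith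
    set q : ℝ → X := fun w => if w < s then β w else p with hqdef
    have hqlt : ∀ w : ℝ, w < s → q w = β w := by
      intro w h; simp only [hqdef]; rw [if_pos h]
    have hqs : q s = p := by simp only [hqdef]; rw [if_neg (lt_irrefl s)]
    have hβray : ∀ x y : ℝ, 0 ≤ x → 0 ≤ y → dist (β x) (β y) = |x - y| := by
      intro x y hx hy; exact hβ x (mem_Ici.2 hx) y (mem_Ici.2 hy)
    have hqg : ∀ x ∈ Icc (0:ℝ) s, ∀ y ∈ Icc (0:ℝ) s,
        (1 / 1) * |x - y| - (M 3 6 + 3) ≤ dist (q x) (q y) ∧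
          dist (q x) (q y) ≤ 1 * |x - y| + (M 3 6 + 3) := by
      rintro x ⟨hx0, hxs⟩ y ⟨hy0, hys⟩
      by_cases hx : x < s <;> by_cases hy : y < s
      · rw [hqlt x hx, hqlt y hy, hβray x y hx0 hy0]
        constructor <;> linarith [abs_nonneg (x - y)]
      · have hy' : y = s := le_antisymm hys (not_lt.1 hy)
        subst hy'
        rw [hqlt x hx, hqs]
        have h1 : dist (β x) (β y) = y - x := by
          rw [hβray x y hx0 hy0, abs_of_nonpos (by linarith)]; ring
        have h2 : dist (β x) p ≤ dist (β x) (β y) + dist (β y) p := dist_triangle _ _ _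
        have h3 : dist (β x) (β y) ≤ dist (β x) p + dist p (β y) := dist_triangle _ _ _
        rw [dist_comm p (β y)] at h3
        have habs : |x - y| = y - x := by rw [abs_of_nonpos (by linarith)]; ring
        rw [habs]
        constructor <;> linarith
      · have hx' : x = s := le_antisymm hxs (not_lt.1 hx)
        subst hx'
        rw [hqlt y hy, hqs, dist_comm]
        have h1 : dist (β y) (β x) = x - y := by
          rw [hβray y x hy0 hx0, abs_of_nonpos (by linarith)]; ring
        have h2 : dist (β y) p ≤ dist (β y) (β x) + dist (β x) p := dist_triangle _ _ _
        have h3 : dist (β y) (β x) ≤ dist (β y) p + dist p (β x) := dist_triangle _ _ _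
        rw [dist_comm p (β x)] at h3
        have habs : |x - y| = x - y := abs_of_nonneg (by linarith)
        rw [habs]
        constructor <;> linarith
      · have hx' : x = s := le_antisymm hxs (not_lt.1 hx)
        have hy' : y = s := le_antisymm hys (not_lt.1 hy)
        subst hx'; subst hy'
        rw [hqs]
        simp only [dist_self, sub_self, abs_zero]
        constructor <;> linarith
    have hq0A : q 0 ∈ α '' Ici (0:ℝ) := by
      rw [hqlt 0 (by linarith), hβ0]; exact hα0A
    have hqsA : q s ∈ α '' Ici (0:ℝ) := by rw [hqs]; exact hpA
    obtain ⟨p', hp'A, hp'd⟩ :=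
      hMo 1 (M 3 6 + 3) le_rfl ha0 q 0 s (by linarith) hqg hq0A hqsA u ⟨hu, by linarith⟩
    rw [hqlt u (by linarith)] at hp'd
    exact ⟨p', hp'A, hp'd⟩
  -- Step III : conclude
  obtain ⟨p, hpA, hpd⟩ := hstep2 t ht
  obtain ⟨r, hr0, rfl⟩ := hpA
  rw [mem_Ici] at hr0
  have hβ0t : dist (β 0) (β t) = t := by
    rw [hβ 0 (mem_Ici.2 le_rfl) t (mem_Ici.2 ht), abs_of_nonpos (by linarith)]; ring
  have hα0r : dist (α 0) (α r) = r := by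
    rw [hα 0 (mem_Ici.2 le_rfl) r (mem_Ici.2 hr0), abs_of_nonpos (by linarith)]; ring
  have htr : |r - t| ≤ dist (β t) (α r) := by
    have h := abs_dist_sub_le (α r) (β t) (α 0)
    rw [dist_comm (α r) (α 0), dist_comm (β t) (α 0)] at h
    rw [hα0r, ← hβ0, hβ0t, dist_comm (α r) (β t)] at h
    exact h
  have htri : dist (α t) (β t) ≤ dist (α t) (α r) + dist (α r) (β t) := dist_triangle _ _ _
  have hαtr : dist (α t) (α r) = |t - r| :=
    hα t (mem_Ici.2 ht) r (mem_Ici.2 hr0)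
  have h1 : |t - r| ≤ M 1 (M 3 6 + 3) := by
    rw [abs_sub_comm]; exact htr.trans hpd
  have h2 : dist (α r) (β t) ≤ M 1 (M 3 6 + 3) := by
    rw [dist_comm]; exact hpd
  rw [hαtr] at htri
  linarith
end
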